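/- arXiv:2308.04759 — 7 statements merged into one kernel-verified Lean document; each statement's English description precedes it below -/
import Mathlib

section
/- Let G₁ be a Hamiltonian graph of odd order 2m+1 and let G₂ be a graph of order n containing a Hamiltonian path. Then G₁ × G₂ contains a cycle of length k for every integer k with 2m+1 ≤ k ≤ n(2m+1); in particular G₁ × G₂ is Hamiltonian. -/
open SimpleGraph

/-- The Cayley graph of an additive group with connection set `S`
(for `S` symmetric and not containing `0`, `u ~ v` iff `u - v ∈ S`). -/
def cayley {A : Type*} [AddGroup A] (S : Set A) : SimpleGraph A :=
  SimpleGraph.fromRel (fun u v => u - v ∈ S)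

/-- The Paley graph on a field `F`: `a ~ b` iff `a - b` is a nonzero square. -/
def paley (F : Type*) [Field F] : SimpleGraph F :=
  SimpleGraph.fromRel (fun a b => IsSquare (a - b))

/-- `G` contains a cycle of length `k`. -/
def hasCycleLength {V : Type*} (G : SimpleGraph V) (k : ℕ) : Prop :=
  ∃ (v : V) (w : G.Walk v v), w.IsCycle ∧ w.length = k

/-- A graph on a finite vertex type is pancyclic if it contains cycles of
all lengths from `3` to its order. -/
def Pancyclic {V : Type*} [Fintype V] (G : SimpleGraph V) : Prop :=
  ∀ k, 3 ≤ k → k ≤ Fintype.card V → hasCycleLength G k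

namespace ProdPancyclic

variable {V : Type*} {G : SimpleGraph V}

def walkOfChain (G : SimpleGraph V) : ∀ (a : V) (l : List V), List.Chain G.Adj a l →
    G.Walk a ((a :: l).getLast (List.cons_ne_nil a l))
  | _, [], _ => SimpleGraph.Walk.nil
  | a, b :: l, h =>
    (SimpleGraph.Walk.cons (List.chain_cons.mp h).1
      (walkOfChain G b l (List.chain_cons.mp h).2)).copy rfl
      (by rw [List.getLast_cons (List.cons_ne_nil b l)])

@[simp] lemma support_walkOfChain : ∀ (a : V) (l : List V) (h : List.Chain G.Adj a l),
    (walkOfChain G a l h).support = a :: l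
  | _, [], _ => rfl
  | a, b :: l, h => by
    rw [walkOfChain, SimpleGraph.Walk.support_copy, SimpleGraph.Walk.support_cons]
    exact congrArg _ (support_walkOfChain b l _)

@[simp] lemma length_walkOfChain : ∀ (a : V) (l : List V) (h : List.Chain G.Adj a l),
    (walkOfChain G a l h).length = l.length
  | _, [], _ => rfl
  | a, b :: l, h => by
    rw [walkOfChain, SimpleGraph.Walk.length_copy, SimpleGraph.Walk.length_cons]
    exact congrArg (· + 1) (length_walkOfChain b l _)

lemma edge_ends_notMem {u v : V} (w : G.Walk u v) (hw : w.support.Nodup) (hlen : 2 ≤ w.length) :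
    s(v, u) ∉ w.edges := by
  cases w with
  | nil => simp at hlen
  | @cons _ b _ hadj q =>
    rw [SimpleGraph.Walk.support_cons, List.nodup_cons] at hw
    rw [SimpleGraph.Walk.edges_cons]
    intro hmem
    rcases List.mem_cons.mp hmem with h1 | h2
    · rw [Sym2.eq_iff] at h1
      rcases h1 with ⟨rfl, rfl⟩ | ⟨rfl, -⟩
      · exact hw.1 q.end_mem_support
      · -- q : G.Walk v v, with nodup support, but length ≥ 1
        have hq : q.IsPath := SimpleGraph.Walk.IsPath.mk' hw.2
        have : q.length = 0 := by
          have := SimpleGraph.Path.loop_eq ⟨q, hq⟩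
          have h0 : q = SimpleGraph.Walk.nil := congrArg Subtype.val this
          rw [h0]; rfl
        rw [SimpleGraph.Walk.length_cons] at hlen
        omega
    · exact hw.1 (q.snd_mem_support_of_mem_edges h2)

lemma hasCycleLength_of_list (L : List V) (hne : L ≠ []) (hchain : L.Chain' G.Adj)
    (hnd : L.Nodup) (hlen : 3 ≤ L.length)
    (hcl : G.Adj (L.getLast hne) (L.head hne)) :
    hasCycleLength G L.length ∧
      ∃ (v : V) (w : G.Walk v v), w.IsCycle ∧ w.length = L.length ∧ w.support.tail = L := by
  match L, hne, hchain, hnd, hlen, hcl with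
  | a :: l, hne, hchain, hnd, hlen, hcl => ?_
  have hch : List.Chain G.Adj a l := hchain
  set w := walkOfChain G a l hch with hw
  have hsupp : w.support = a :: l := support_walkOfChain a l hch
  have hpath : w.IsPath := SimpleGraph.Walk.IsPath.mk' (by rw [hsupp]; exact hnd)
  have hlength : w.length = l.length := length_walkOfChain a l hch
  have hL : (a :: l).head hne = a := rfl
  rw [hL] at hcl
  have hcyc : (SimpleGraph.Walk.cons hcl w).IsCycle := by
    rw [SimpleGraph.Walk.cons_isCycle_iff]
    refine ⟨hpath, edge_ends_notMem w (by rw [hsupp]; exact hnd) ?_⟩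
    rw [hlength]; simp only [List.length_cons] at hlen; omega
  refine ⟨⟨_, _, hcyc, ?_⟩, _, _, hcyc, ⟨?_, ?_⟩⟩
  · rw [SimpleGraph.Walk.length_cons, hlength, List.length_cons]
  · rw [SimpleGraph.Walk.length_cons, hlength, List.length_cons]
  · rw [SimpleGraph.Walk.support_cons, List.tail_cons, hsupp]

end ProdPancyclic
open SimpleGraph

namespace ProdPancyclic
variable {V : Type*} {G : SimpleGraph V}

lemma support_eq_map_getVert {u v : V} (p : G.Walk u v) :
    p.support = (List.range (p.length + 1)).map p.getVert := by
  induction p with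
  | nil => simp [List.range_succ]
  | cons h q ih =>
    rw [SimpleGraph.Walk.support_cons, SimpleGraph.Walk.length_cons, ih,
      List.range_succ_eq_map (n := q.length + 1), List.map_cons, List.map_map]
    congr 1

lemma cycle_getVert_injOn {v : V} {w : G.Walk v v} (hw : w.IsCycle) :
    ∀ i < w.length, ∀ j < w.length, w.getVert i = w.getVert j → i = j := by
  have hnd : w.support.tail.Nodup := hw.support_nodup
  rw [support_eq_map_getVert, List.range_succ_eq_map, List.map_cons, List.tail_cons,
    List.map_map] at hnd
  have inj1 : ∀ i < w.length, ∀ j < w.length,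
      w.getVert (i + 1) = w.getVert (j + 1) → i = j := by
    intro i hi j hj hij
    exact List.inj_on_of_nodup_map hnd (List.mem_range.mpr hi) (List.mem_range.mpr hj) hij
  have h3 : 3 ≤ w.length := hw.three_le_length
  intro i hi j hj hij
  have key : ∀ a b : ℕ, a < w.length → b < w.length → w.getVert a = w.getVert b →
      a = 0 → b ≠ 0 → False := by
    intro a b ha hb hab ha0 hb0
    subst ha0
    have : w.getVert (w.length - 1 + 1) = w.getVert (b - 1 + 1) := by
      have h1 : w.length - 1 + 1 = w.length := by omega
      have h2 : b - 1 + 1 = b := by omega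
      rw [h1, h2, SimpleGraph.Walk.getVert_length, ← hab, SimpleGraph.Walk.getVert_zero]
    have := inj1 _ (by omega) _ (by omega) this
    omega
  rcases Nat.eq_zero_or_pos i with rfl | hi0
  · rcases Nat.eq_zero_or_pos j with rfl | hj0
    · rfl
    · exact absurd hij (fun h => key 0 j hi hj h rfl (by omega))
  · rcases Nat.eq_zero_or_pos j with rfl | hj0
    · exact absurd hij.symm (fun h => key 0 i hj hi h rfl (by omega))
    · have := inj1 (i-1) (by omega) (j-1) (by omega) (by
        have h1 : i - 1 + 1 = i := by omega
        have h2 : j - 1 + 1 = j := by omega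
        rw [h1, h2]; exact hij)
      omega

lemma path_getVert_injOn {u v : V} {w : G.Walk u v} (hw : w.IsPath) :
    ∀ i ≤ w.length, ∀ j ≤ w.length, w.getVert i = w.getVert j → i = j := by
  have hnd := hw.support_nodup
  rw [support_eq_map_getVert] at hnd
  intro i hi j hj hij
  exact List.inj_on_of_nodup_map hnd (List.mem_range.mpr (by omega))
    (List.mem_range.mpr (by omega)) hij

end ProdPancyclic

namespace ProdPancyclic

def stepOK (s : ℕ) (x y : ℕ × ℕ) : Prop :=
  (x.1 = y.1 ∧ (x.2 + 1 = y.2 ∨ y.2 + 1 = x.2)) ∨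
  (x.2 = y.2 ∧ (x.1 + 1 = y.1 ∨ y.1 + 1 = x.1 ∨ (x.1 + 1 = s ∧ y.1 = 0) ∨
    (y.1 + 1 = s ∧ x.1 = 0)))

def seg (q a a2 i : ℕ) : List (ℕ × ℕ) :=
  [(2*i+1, q-1)] ++
  (if i < a then [(2*i+1, q)] ++
      (if i < a2 then [(2*i+1, q+1), (2*i+2, q+1)] else []) ++ [(2*i+2, q)]
    else []) ++
  [(2*i+2, q-1)]

def partA (q : ℕ) : List (ℕ × ℕ) := (List.range q).map (fun j => (0, j))

def partB (m q a a2 : ℕ) : List (ℕ × ℕ) := (List.range m).flatMap (seg q a a2)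

def gC (m q b t : ℕ) : ℕ × ℕ := (if b % 2 = 0 then 2*m - t else t + 1, q - 2 - b)

def partC (m q : ℕ) : List (ℕ × ℕ) :=
  (List.range (q-1)).flatMap (fun b => (List.range (2*m)).map (gC m q b))

def bigList (m q a a2 : ℕ) : List (ℕ × ℕ) := partA q ++ partB m q a a2 ++ partC m q

-- helper: chain' of a map over range
lemma chain'_map_range {α : Type*} {R : α → α → Prop} (f : ℕ → α) (N : ℕ)
    (h : ∀ i, i + 1 < N → R (f i) (f (i+1))) : List.Chain' R ((List.range N).map f) := by
  rw [List.Chain', List.isChain_map, List.isChain_iff_getElem]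
  intro i hi
  simp only [List.length_range] at hi
  simp only [List.get_eq_getElem, List.getElem_range]
  exact h i (by omega)

lemma seg_ne_nil (q a a2 i : ℕ) : seg q a a2 i ≠ [] := by
  simp [seg]

lemma seg_head? (q a a2 i : ℕ) : (seg q a a2 i).head? = some (2*i+1, q-1) := rfl

lemma seg_getLast? (q a a2 i : ℕ) : (seg q a a2 i).getLast? = some (2*i+2, q-1) := by
  unfold seg
  split_ifs <;> rfl

lemma seg_chain' (s q a a2 i : ℕ) (hq : 1 ≤ q) (hs : 2*i+2 < s) :
    List.Chain' (stepOK s) (seg q a a2 i) := by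
  unfold seg
  split_ifs <;> simp [List.Chain', List.isChain_cons_cons, stepOK] <;> omega

lemma seg_nodup (q a a2 i : ℕ) (hq : 1 ≤ q) : (seg q a a2 i).Nodup := by
  unfold seg
  split_ifs <;> simp [Prod.ext_iff] <;> omega

lemma mem_seg {x : ℕ × ℕ} {q a a2 i : ℕ} (hx : x ∈ seg q a a2 i) :
    (x.1 = 2*i+1 ∨ x.1 = 2*i+2) ∧
      (x.2 = q-1 ∨ (i < a ∧ x.2 = q) ∨ (i < a2 ∧ x.2 = q+1)) := by
  unfold seg at hx
  split_ifs at hx <;> simp [Prod.ext_iff] at hx <;> omega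

lemma partB_chain' (s m q a a2 : ℕ) (hq : 1 ≤ q) (hs : 2*m < s) :
    List.Chain' (stepOK s) (partB m q a a2) := by
  rw [partB, List.flatMap_def, List.Chain', List.isChain_flatten (by simp [seg_ne_nil])]
  constructor
  · intro l hl
    simp only [List.mem_map, List.mem_range] at hl
    obtain ⟨i, hi, rfl⟩ := hl
    exact seg_chain' s q a a2 i hq (by omega)
  · apply chain'_map_range
    intro i hi
    rw [seg_getLast?, seg_head?]
    intro x hx y hy
    simp only [Option.mem_def, Option.some_inj] at hx hy
    subst hx; subst hy
    right
    exact ⟨rfl, by omega⟩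

lemma partB_nodup (m q a a2 : ℕ) (hq : 1 ≤ q) : (partB m q a a2).Nodup := by
  rw [partB, List.nodup_flatMap]
  refine ⟨fun i _ => seg_nodup q a a2 i hq, ?_⟩
  have := List.pairwise_lt_range (n := m)
  refine this.imp ?_
  intro i j hij
  intro x hx hx'
  have h1 := (mem_seg hx).1
  have h2 := (mem_seg hx').1
  omega

lemma mem_partB {x : ℕ × ℕ} {m q a a2 : ℕ} (hx : x ∈ partB m q a a2) :
    (1 ≤ x.1 ∧ x.1 ≤ 2*m) ∧
      (x.2 = q-1 ∨ (0 < a ∧ x.2 = q) ∨ (0 < a2 ∧ x.2 = q+1)) := by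
  rw [partB, List.mem_flatMap] at hx
  obtain ⟨i, hi, hx⟩ := hx
  simp only [List.mem_range] at hi
  obtain ⟨h1, h2⟩ := mem_seg hx
  constructor
  · omega
  · rcases h2 with h | ⟨h, h'⟩ | ⟨h, h'⟩
    · exact Or.inl h
    · exact Or.inr (Or.inl ⟨by omega, h'⟩)
    · exact Or.inr (Or.inr ⟨by omega, h'⟩)

lemma partB_head? (m q a a2 : ℕ) (hm : 1 ≤ m) : (partB m q a a2).head? = some (1, q-1) := by
  obtain ⟨t, rfl⟩ : ∃ t, m = t + 1 := ⟨m - 1, by omega⟩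
  rw [partB, List.range_succ_eq_map, List.flatMap_cons,
    List.head?_append_of_ne_nil _ (seg_ne_nil q a a2 0)]
  exact seg_head? q a a2 0

lemma partB_getLast? (m q a a2 : ℕ) (hm : 1 ≤ m) :
    (partB m q a a2).getLast? = some (2*m, q-1) := by
  obtain ⟨t, rfl⟩ : ∃ t, m = t + 1 := ⟨m - 1, by omega⟩
  rw [partB, List.range_succ, List.flatMap_append, List.flatMap_cons, List.flatMap_nil,
    List.append_nil, List.getLast?_append_of_ne_nil _ (seg_ne_nil q a a2 t)]
  rw [seg_getLast?]
  congr 2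


lemma partB_ne_nil (m q a a2 : ℕ) (hm : 1 ≤ m) : partB m q a a2 ≠ [] := by
  intro h
  have := partB_head? m q a a2 hm
  rw [h] at this
  simp at this


lemma blockC_ne_nil (m q b : ℕ) (hm : 1 ≤ m) : (List.range (2*m)).map (gC m q b) ≠ [] := by
  simp only [ne_eq, List.map_eq_nil_iff, List.range_eq_nil]
  omega

lemma blockC_head? (m q b : ℕ) (hm : 1 ≤ m) :
    ((List.range (2*m)).map (gC m q b)).head? = some (gC m q b 0) := by
  obtain ⟨t, ht⟩ : ∃ t, 2*m = t + 1 := ⟨2*m - 1, by omega⟩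
  rw [ht, List.range_succ_eq_map, List.map_cons, List.head?_cons]

lemma blockC_getLast? (m q b : ℕ) (hm : 1 ≤ m) :
    ((List.range (2*m)).map (gC m q b)).getLast? = some (gC m q b (2*m - 1)) := by
  obtain ⟨t, ht⟩ : ∃ t, 2*m = t + 1 := ⟨2*m - 1, by omega⟩
  rw [ht, List.range_succ, List.map_append, List.getLast?_append_of_ne_nil _ (by simp)]
  have ht' : t = 2*m - 1 := by omega
  subst ht'
  simp


lemma partC_chain' (s m q : ℕ) (hm : 1 ≤ m) (hs : s = 2*m+1) :
    List.Chain' (stepOK s) (partC m q) := by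
  rw [partC, List.flatMap_def, List.Chain', List.isChain_flatten (by
    intro h
    rw [List.mem_map] at h
    obtain ⟨b, _, hb⟩ := h
    exact blockC_ne_nil m q b hm hb)]
  constructor
  · intro l hl
    simp only [List.mem_map, List.mem_range] at hl
    obtain ⟨b, hb, rfl⟩ := hl
    apply chain'_map_range
    intro t ht
    unfold gC stepOK
    rcases Nat.even_or_odd b with hb2 | hb2 <;> simp [Nat.even_iff, Nat.odd_iff] at hb2 <;>
      simp [hb2] <;> omega
  · apply chain'_map_range
    intro b hb
    rw [blockC_getLast? m q b hm, blockC_head? m q (b+1) hm]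
    intro x hx y hy
    simp only [Option.mem_def, Option.some_inj] at hx hy
    subst hx; subst hy
    unfold gC stepOK
    rcases Nat.even_or_odd b with hb2 | hb2 <;> simp [Nat.even_iff, Nat.odd_iff] at hb2 <;>
      simp [hb2, Nat.add_mod] <;> omega

lemma partC_nodup (m q : ℕ) : (partC m q).Nodup := by
  rw [partC, List.nodup_flatMap]
  constructor
  · intro b _
    refine List.Nodup.map_on ?_ List.nodup_range
    intro t ht t' ht' h
    simp only [List.mem_range] at ht ht'
    unfold gC at h
    rw [Prod.ext_iff] at h
    rcases Nat.even_or_odd b with hb2 | hb2 <;> simp [Nat.even_iff, Nat.odd_iff] at hb2 <;>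
      simp [hb2] at h <;> omega
  · have := List.pairwise_lt_range (n := q-1)
    refine List.Pairwise.imp_of_mem ?_ this
    intro b b' hb hb' hbb x hx hx'
    simp only [List.mem_range] at hb hb'
    simp only [List.mem_map, List.mem_range] at hx hx'
    obtain ⟨t, ht, rfl⟩ := hx
    obtain ⟨t', ht', h2⟩ := hx'
    have e1 : (gC m q b t).2 = q - 2 - b := rfl
    have e2 : (gC m q b' t').2 = q - 2 - b' := rfl
    rw [h2] at e2
    omega

lemma mem_partC {x : ℕ × ℕ} {m q : ℕ} (hx : x ∈ partC m q) :
    (1 ≤ x.1 ∧ x.1 ≤ 2*m) ∧ (q ≥ 2 ∧ x.2 ≤ q - 2) := by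
  rw [partC, List.mem_flatMap] at hx
  obtain ⟨b, hb, hx⟩ := hx
  simp only [List.mem_range] at hb
  rw [List.mem_map] at hx
  obtain ⟨t, ht, rfl⟩ := hx
  simp only [List.mem_range] at ht
  unfold gC
  constructor
  · rcases Nat.even_or_odd b with hb2 | hb2 <;> simp [Nat.even_iff, Nat.odd_iff] at hb2 <;>
      simp [hb2] <;> omega
  · constructor
    · omega
    · simp only
      omega


lemma length_seg (q a a2 i : ℕ) :
    (seg q a a2 i).length = 2 + (if i < a then (2 + if i < a2 then 2 else 0) else 0) := by
  unfold seg
  split_ifs <;> simp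

lemma length_partB (m q a a2 : ℕ) (ha2 : a2 ≤ a) :
    (partB m q a a2).length = 2*m + 2*(min a m) + 2*(min a2 m) := by
  induction m with
  | zero => simp [partB]
  | succ t ih =>
    rw [partB, List.range_succ, List.flatMap_append, List.flatMap_cons, List.flatMap_nil,
      List.append_nil, List.length_append]
    rw [partB] at ih
    rw [ih, length_seg]
    split_ifs <;> omega

lemma length_partA (q : ℕ) : (partA q).length = q := by simp [partA]

lemma length_partC (m q : ℕ) : (partC m q).length = (q-1) * (2*m) := by
  rw [partC]
  induction (q-1) with
  | zero => simp
  | succ t ih =>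
    rw [List.range_succ, List.flatMap_append, List.flatMap_cons, List.flatMap_nil,
      List.append_nil, List.length_append, ih]
    simp only [List.length_map, List.length_range]
    ring

lemma length_bigList (m q a a2 : ℕ) (hq : 1 ≤ q) (ha : a ≤ m) (ha2 : a2 ≤ a) :
    (bigList m q a a2).length = q * (2*m+1) + 2*a + 2*a2 := by
  rw [bigList, List.length_append, List.length_append, length_partA, length_partB m q a a2 ha2,
    length_partC]
  have h1 : min a m = a := by omega
  have h2 : min a2 m = a2 := by omega
  rw [h1, h2]
  cases q with
  | zero => omega
  | succ t => simp only [Nat.add_sub_cancel]; ring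

lemma partC_eq_nil (m : ℕ) : partC m 1 = [] := by simp [partC]

lemma partA_ne_nil (q : ℕ) (hq : 1 ≤ q) : partA q ≠ [] := by
  intro h
  have := congrArg List.length h
  rw [length_partA] at this
  simp at this
  omega

lemma bigList_ne_nil (m q a a2 : ℕ) (hq : 1 ≤ q) : bigList m q a a2 ≠ [] := by
  intro h
  obtain ⟨h1, h2⟩ := List.append_eq_nil_iff.mp h
  obtain ⟨h3, h4⟩ := List.append_eq_nil_iff.mp h1
  exact partA_ne_nil q hq h3

lemma partA_head? (q : ℕ) (hq : 1 ≤ q) : (partA q).head? = some (0, 0) := by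
  obtain ⟨t, rfl⟩ : ∃ t, q = t + 1 := ⟨q - 1, by omega⟩
  rw [partA, List.range_succ_eq_map, List.map_cons, List.head?_cons]

lemma partA_getLast? (q : ℕ) (hq : 1 ≤ q) : (partA q).getLast? = some (0, q - 1) := by
  obtain ⟨t, rfl⟩ : ∃ t, q = t + 1 := ⟨q - 1, by omega⟩
  rw [partA, List.range_succ, List.map_append, List.getLast?_append_of_ne_nil _ (by simp)]
  simp

lemma bigList_head? (m q a a2 : ℕ) (hq : 1 ≤ q) :
    (bigList m q a a2).head? = some (0, 0) := by
  rw [bigList, List.append_assoc, List.head?_append_of_ne_nil _ (partA_ne_nil q hq)]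
  exact partA_head? q hq

lemma bigList_getLast? (m q a a2 : ℕ) (hm : 1 ≤ m) (hq : 1 ≤ q) :
    (bigList m q a a2).getLast? =
      some (if q = 1 then ((2*m : ℕ), (0 : ℕ)) else gC m q (q-2) (2*m-1)) := by
  rcases eq_or_lt_of_le hq with h1 | h2
  · rw [bigList, ← h1, partC_eq_nil, List.append_nil,
      List.getLast?_append_of_ne_nil _ (partB_ne_nil m 1 a a2 hm)]
    rw [partB_getLast? m 1 a a2 hm]
    simp
  · have hq2 : 2 ≤ q := h2
    have hC : partC m q ≠ [] := by
      intro h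
      have := congrArg List.length h
      rw [length_partC] at this
      simp at this
      omega
    rw [bigList, List.getLast?_append_of_ne_nil _ hC, partC]
    obtain ⟨t, ht⟩ : ∃ t, q - 1 = t + 1 := ⟨q - 2, by omega⟩
    rw [ht, List.range_succ, List.flatMap_append, List.flatMap_cons, List.flatMap_nil,
      List.append_nil, List.getLast?_append_of_ne_nil _ (blockC_ne_nil m q t hm),
      blockC_getLast? m q t hm]
    have : t = q - 2 := by omega
    subst this
    simp [if_neg (by omega : ¬ q = 1)]

lemma bigList_chain' (s m q a a2 : ℕ) (hm : 1 ≤ m) (hq : 1 ≤ q) (hs : s = 2*m+1) :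
    List.Chain' (stepOK s) (bigList m q a a2) := by
  rw [bigList]
  apply List.IsChain.append
  · apply List.IsChain.append
    · apply chain'_map_range
      intro i hi
      exact Or.inl ⟨rfl, Or.inl rfl⟩
    · exact partB_chain' s m q a a2 hq (by omega)
    · intro x hx y hy
      rw [partA_getLast? q hq] at hx
      rw [partB_head? m q a a2 hm] at hy
      simp only [Option.mem_def, Option.some_inj] at hx hy
      subst hx; subst hy
      exact Or.inr ⟨rfl, Or.inl rfl⟩
  · exact partC_chain' s m q hm hs
  · intro x hx y hy
    rcases eq_or_lt_of_le hq with h1 | h2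
    · rw [← h1, partC_eq_nil] at hy
      simp at hy
    · have hq2 : 2 ≤ q := h2
      rw [List.getLast?_append_of_ne_nil _ (partB_ne_nil m q a a2 hm),
        partB_getLast? m q a a2 hm] at hx
      rw [partC] at hy
      obtain ⟨t, ht⟩ : ∃ t, q - 1 = t + 1 := ⟨q - 2, by omega⟩
      rw [ht, List.range_succ_eq_map, List.flatMap_cons,
        List.head?_append_of_ne_nil _ (blockC_ne_nil m q 0 hm), blockC_head? m q 0 hm] at hy
      simp only [Option.mem_def, Option.some_inj] at hx hy
      subst hx; subst hy
      refine Or.inl ⟨?_, Or.inr ?_⟩ <;> simp [gC] <;> omega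

lemma bigList_closing (s m q a a2 : ℕ) (hm : 1 ≤ m) (hq : 1 ≤ q) (hs : s = 2*m+1)
    (h : bigList m q a a2 ≠ []) :
    stepOK s ((bigList m q a a2).getLast h) ((bigList m q a a2).head h) := by
  have h1 := bigList_getLast? m q a a2 hm hq
  have h2 := bigList_head? m q a a2 hq
  rw [List.getLast?_eq_getLast h, Option.some_inj] at h1
  rw [List.head?_eq_head h, Option.some_inj] at h2
  rw [h1, h2]
  rcases eq_or_ne q 1 with hq1 | hq1
  · subst hq1
    rw [if_pos rfl]
    exact Or.inr ⟨rfl, Or.inr (Or.inr (Or.inl ⟨by omega, rfl⟩))⟩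
  · rw [if_neg hq1]
    unfold gC
    have he : q - 2 - (q - 2) = 0 := by omega
    rw [he]
    rcases Nat.even_or_odd (q-2) with hb2 | hb2 <;> simp [Nat.even_iff, Nat.odd_iff] at hb2 <;>
      rw [hb2] <;> unfold stepOK <;> simp <;> omega

lemma bigList_bounds {x : ℕ × ℕ} {m q a a2 : ℕ} (hq : 1 ≤ q) (hx : x ∈ bigList m q a a2) :
    x.1 ≤ 2*m ∧ (x.2 < q ∨ (0 < a ∧ x.2 = q) ∨ (0 < a2 ∧ x.2 = q+1)) := by
  rw [bigList, List.mem_append, List.mem_append] at hx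
  rcases hx with (hx | hx) | hx
  · rw [partA, List.mem_map] at hx
    obtain ⟨j, hj, rfl⟩ := hx
    simp only [List.mem_range] at hj
    exact ⟨by omega, Or.inl (by omega)⟩
  · obtain ⟨h1, h2⟩ := mem_partB hx
    refine ⟨by omega, ?_⟩
    rcases h2 with h | h | h
    · exact Or.inl (by omega)
    · exact Or.inr (Or.inl h)
    · exact Or.inr (Or.inr h)
  · obtain ⟨h1, h2⟩ := mem_partC hx
    exact ⟨by omega, Or.inl (by omega)⟩

lemma bigList_coverage {m q : ℕ} (hm : 1 ≤ m) (hq : 1 ≤ q) (r j : ℕ)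
    (hr : r ≤ 2*m) (hj : j < q) : (r, j) ∈ bigList m q 0 0 := by
  rw [bigList, List.mem_append, List.mem_append]
  rcases Nat.eq_zero_or_pos r with rfl | hr1
  · left; left
    rw [partA, List.mem_map]
    exact ⟨j, List.mem_range.mpr hj, rfl⟩
  rcases eq_or_ne j (q-1) with rfl | hjq
  · left; right
    rw [partB, List.mem_flatMap]
    refine ⟨(r-1)/2, List.mem_range.mpr (by
      have h2 : (r-1)/2*2 ≤ r-1 := Nat.div_mul_le_self _ _
      omega), ?_⟩
    unfold seg
    rw [if_neg (by omega)]
    simp only [List.nil_append, List.cons_append, List.mem_cons, List.mem_singleton,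
      List.not_mem_nil, or_false, Prod.mk.injEq, and_true]
    omega
  · right
    have hq2 : 2 ≤ q := by omega
    have hj2 : j ≤ q - 2 := by omega
    rw [partC, List.mem_flatMap]
    refine ⟨q-2-j, List.mem_range.mpr (by omega), ?_⟩
    rw [List.mem_map]
    rcases eq_or_ne ((q-2-j) % 2) 0 with hpar | hpar
    · refine ⟨2*m - r, List.mem_range.mpr (by omega), ?_⟩
      unfold gC
      rw [if_pos hpar, Prod.ext_iff]
      exact ⟨by simp; omega, by simp; omega⟩
    · refine ⟨r - 1, List.mem_range.mpr (by omega), ?_⟩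
      unfold gC
      rw [if_neg hpar, Prod.ext_iff]
      exact ⟨by simp; omega, by simp; omega⟩

end ProdPancyclic
namespace ProdPancyclic



def rectList (h : ℕ) : List (ℕ × ℕ) :=
  (List.range (h+1)).map (fun i => (i, 0)) ++ (List.range (h+1)).map (fun i => (h - i, 1))

lemma rectList_length (h : ℕ) : (rectList h).length = 2*h + 2 := by
  simp [rectList]; omega

lemma rectList_ne_nil (h : ℕ) : rectList h ≠ [] := by simp [rectList]

lemma rectList_chain' (s h : ℕ) (hh : h + 1 < s) : List.Chain' (stepOK s) (rectList h) := by
  rw [rectList]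
  apply List.IsChain.append
  · apply chain'_map_range
    intro i hi
    exact Or.inr ⟨rfl, Or.inl rfl⟩
  · apply chain'_map_range
    intro i hi
    exact Or.inr ⟨rfl, Or.inr (Or.inl (by omega))⟩
  · intro x hx y hy
    rw [List.getLast?_map] at hx
    rw [List.head?_map] at hy
    rw [List.range_succ, List.getLast?_append_of_ne_nil _ (by simp)] at hx
    rw [List.range_succ_eq_map, List.head?_cons] at hy
    simp only [List.getLast?_singleton, Option.map_some, Option.mem_def, Option.some_inj] at hx hy
    subst hx; subst hy
    exact Or.inl ⟨by simp, Or.inl rfl⟩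

lemma rectList_nodup (h : ℕ) : (rectList h).Nodup := by
  rw [rectList, List.nodup_append]
  refine ⟨?_, ?_, ?_⟩
  · exact List.Nodup.map_on (by intro a _ b _ hab; exact (Prod.ext_iff.mp hab).1)
      List.nodup_range
  · refine List.Nodup.map_on ?_ List.nodup_range
    intro a ha b hb hab
    simp only [List.mem_range] at ha hb
    have := congrArg Prod.fst hab
    simp only at this
    omega
  · intro x hx x' hx' hxx
    subst hxx
    simp only [List.mem_map, List.mem_range] at hx hx'
    obtain ⟨i, hi, rfl⟩ := hx
    obtain ⟨j, hj, hx'⟩ := hx'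
    have := congrArg Prod.snd hx'
    simp at this

lemma rectList_closing (s h : ℕ) (hne : rectList h ≠ []) :
    stepOK s ((rectList h).getLast hne) ((rectList h).head hne) := by
  have h1 : (rectList h).getLast? = some (0, 1) := by
    rw [rectList, List.getLast?_append_of_ne_nil _ (by simp), List.getLast?_map,
      List.range_succ, List.getLast?_append_of_ne_nil _ (by simp)]
    simp
  have h2 : (rectList h).head? = some (0, 0) := by
    rw [rectList, List.head?_append_of_ne_nil _ (by simp), List.head?_map,
      List.range_succ_eq_map, List.head?_cons]
    rfl
  rw [List.getLast?_eq_getLast hne, Option.some_inj] at h1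
  rw [List.head?_eq_head hne, Option.some_inj] at h2
  rw [h1, h2]
  exact Or.inl ⟨rfl, Or.inr rfl⟩

lemma rectList_bounds {x : ℕ × ℕ} {h : ℕ} (hx : x ∈ rectList h) : x.1 ≤ h ∧ x.2 ≤ 1 := by
  rw [rectList, List.mem_append] at hx
  rcases hx with hx | hx <;> simp only [List.mem_map, List.mem_range] at hx <;>
    obtain ⟨i, hi, rfl⟩ := hx <;> simp <;> omega

end ProdPancyclic
section Glue
open SimpleGraph
namespace ProdPancyclic

lemma chain'_imp {α : Type*} {R S : α → α → Prop} {P : α → Prop} :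
    ∀ {l : List α}, List.Chain' R l → (∀ x ∈ l, P x) →
      (∀ x y, P x → P y → R x y → S x y) → List.Chain' S l := by
  intro l
  induction l with
  | nil => intro _ _ _; exact List.IsChain.nil
  | cons x t ih =>
    intro hR hP himp
    rw [List.Chain', List.isChain_cons] at hR ⊢
    refine ⟨?_, ih hR.2 (fun z hz => hP z (List.mem_cons_of_mem _ hz)) himp⟩
    intro y hy
    exact himp x y (hP x List.mem_cons_self)
      (hP y (List.mem_cons_of_mem _ (List.mem_of_mem_head? hy))) (hR.1 y hy)

variable {V₁ V₂ : Type*} {G₁ : SimpleGraph V₁} {G₂ : SimpleGraph V₂}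

lemma step_to_adj {c : ℕ → V₁} {p : ℕ → V₂} {s n : ℕ}
    (hcadj : ∀ i, i < s → G₁.Adj (c i) (c (i+1))) (hcs : c s = c 0)
    (hpadj : ∀ j, j+1 < n → G₂.Adj (p j) (p (j+1))) {x y : ℕ × ℕ}
    (hx : x.1 < s ∧ x.2 < n) (hy : y.1 < s ∧ y.2 < n) (hstep : stepOK s x y) :
    (G₁ □ G₂).Adj (c x.1, p x.2) (c y.1, p y.2) := by
  rw [SimpleGraph.boxProd_adj]
  rcases hstep with ⟨h1, h2⟩ | ⟨h1, h2⟩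
  · right
    refine ⟨?_, by show c x.1 = c y.1; rw [h1]⟩
    show G₂.Adj (p x.2) (p y.2)
    rcases h2 with h | h
    · have := hpadj x.2 (by omega)
      rwa [h] at this
    · have := hpadj y.2 (by omega)
      rw [h] at this
      exact this.symm
  · left
    refine ⟨?_, by show p x.2 = p y.2; rw [h1]⟩
    show G₁.Adj (c x.1) (c y.1)
    rcases h2 with h | h | ⟨ha, hb⟩ | ⟨ha, hb⟩
    · have := hcadj x.1 (by omega)
      rwa [h] at this
    · have := hcadj y.1 (by omega)
      rw [h] at this
      exact this.symm
    · rw [hb]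
      have := hcadj x.1 (by omega)
      rwa [ha, hcs] at this
    · rw [hb]
      have := hcadj y.1 (by omega)
      rw [ha, hcs] at this
      exact this.symm

lemma cycle_of_natList {c : ℕ → V₁} {p : ℕ → V₂} {s n : ℕ}
    (hcadj : ∀ i, i < s → G₁.Adj (c i) (c (i+1))) (hcs : c s = c 0)
    (hcinj : ∀ i, i < s → ∀ j, j < s → c i = c j → i = j)
    (hpadj : ∀ j, j+1 < n → G₂.Adj (p j) (p (j+1)))
    (hpinj : ∀ i, i < n → ∀ j, j < n → p i = p j → i = j)
    (L : List (ℕ × ℕ)) (hLne : L ≠ []) (hch : L.Chain' (stepOK s)) (hnd : L.Nodup)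
    (hlen3 : 3 ≤ L.length) (hbd : ∀ x ∈ L, x.1 < s ∧ x.2 < n)
    (hclose : stepOK s (L.getLast hLne) (L.head hLne)) :
    hasCycleLength (G₁ □ G₂) L.length ∧
      ∃ (v : V₁ × V₂) (w : (G₁ □ G₂).Walk v v), w.IsCycle ∧
        w.support.tail = L.map (fun x => (c x.1, p x.2)) := by
  set f : ℕ × ℕ → V₁ × V₂ := fun x => (c x.1, p x.2) with hf
  set M := L.map f with hM
  have hMne : M ≠ [] := by simp [hM, hLne]
  have hMch : M.Chain' (G₁ □ G₂).Adj := by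
    rw [hM, List.Chain', List.isChain_map]
    exact chain'_imp hch hbd (fun x y hx hy hstep => step_to_adj hcadj hcs hpadj hx hy hstep)
  have hMnd : M.Nodup := by
    refine hnd.map_on ?_
    intro x hx y hy hxy
    rw [Prod.ext_iff] at hxy ⊢
    obtain ⟨hx1, hx2⟩ := hbd x hx
    obtain ⟨hy1, hy2⟩ := hbd y hy
    exact ⟨hcinj _ hx1 _ hy1 hxy.1, hpinj _ hx2 _ hy2 hxy.2⟩
  have hMlen : M.length = L.length := by rw [hM, List.length_map]
  have hMlast : M.getLast hMne = f (L.getLast hLne) := by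
    have := List.getLast?_map (f := f) (l := L)
    rw [List.getLast?_eq_getLast hLne, List.getLast?_eq_getLast hMne] at this
    simpa using this
  have hMhead : M.head hMne = f (L.head hLne) := by
    have := List.head?_map (f := f) (l := L)
    rw [List.head?_eq_head hLne, List.head?_eq_head hMne] at this
    simpa using this
  have hMclose : (G₁ □ G₂).Adj (M.getLast hMne) (M.head hMne) := by
    rw [hMlast, hMhead]
    exact step_to_adj hcadj hcs hpadj (hbd _ (List.getLast_mem hLne))
      (hbd _ (List.head_mem hLne)) hclose
  have := hasCycleLength_of_list M hMne hMch hMnd (by omega) hMclose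
  obtain ⟨h1, v, w, hcyc, hlen, hsupp⟩ := this
  rw [hMlen] at h1
  exact ⟨h1, v, w, hcyc, hsupp⟩

end ProdPancyclic
end Glue

namespace ProdPancyclic

lemma mem_partA {x : ℕ × ℕ} {q : ℕ} (hx : x ∈ partA q) : x.1 = 0 ∧ x.2 < q := by
  rw [partA, List.mem_map] at hx
  obtain ⟨j, hj, rfl⟩ := hx
  simp only [List.mem_range] at hj
  exact ⟨rfl, hj⟩

lemma bigList_nodup (m q a a2 : ℕ) (hq : 1 ≤ q) : (bigList m q a a2).Nodup := by
  rw [bigList, List.nodup_append]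
  refine ⟨?_, partC_nodup m q, ?_⟩
  · rw [List.nodup_append]
    refine ⟨?_, partB_nodup m q a a2 hq, ?_⟩
    · refine List.Nodup.map_on ?_ List.nodup_range
      intro i _ j _ hij
      exact (Prod.ext_iff.mp hij).2
    · intro x hx x' hx' hxx
      subst hxx
      have h1 := (mem_partA hx).1
      have h2 := (mem_partB hx').1
      omega
  · intro x hx x' hx' hxx
    subst hxx
    obtain ⟨h1, h2⟩ := mem_partC hx'
    rw [List.mem_append] at hx
    rcases hx with hx | hx
    · have := (mem_partA hx).1
      omega
    · have := (mem_partB hx).2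
      rcases this with h | ⟨_, h⟩ | ⟨_, h⟩ <;> omega

end ProdPancyclic


open ProdPancyclic

theorem stmt3 {V₁ V₂ : Type*} [Fintype V₁] [Fintype V₂] [DecidableEq V₁] [DecidableEq V₂]
    (m n : ℕ) (G₁ : SimpleGraph V₁) (G₂ : SimpleGraph V₂)
    (h₁ : Fintype.card V₁ = 2 * m + 1) (h₂ : Fintype.card V₂ = n)
    (hham : ∃ (v : V₁) (w : G₁.Walk v v), w.IsHamiltonianCycle)
    (hpath : ∃ (u v : V₂) (p : G₂.Walk u v), p.IsHamiltonian) :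
    (∀ k, 2 * m + 1 ≤ k → k ≤ n * (2 * m + 1) → hasCycleLength (G₁ □ G₂) k) ∧
    ∃ (v : V₁ × V₂) (w : (G₁ □ G₂).Walk v v), w.IsHamiltonianCycle := by
  classical
  obtain ⟨v₁, w₁, hw₁⟩ := hham
  obtain ⟨u₂, v₂, w₂, hw₂⟩ := hpath
  have hw1len : w₁.length = 2 * m + 1 := by rw [hw₁.length_eq, h₁]
  have hs3 : 3 ≤ 2 * m + 1 := by rw [← hw1len]; exact hw₁.isCycle.three_le_length
  have hm : 1 ≤ m := by omega
  have hn : 1 ≤ n := by rw [← h₂]; exact Fintype.card_pos_iff.mpr ⟨u₂⟩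
  have hw2len : w₂.length = n - 1 := by rw [hw₂.length_eq, h₂]
  set c : ℕ → V₁ := w₁.getVert with hc
  set p : ℕ → V₂ := w₂.getVert with hp
  have hcadj : ∀ i, i < 2 * m + 1 → G₁.Adj (c i) (c (i+1)) := fun i hi =>
    w₁.adj_getVert_succ (by omega)
  have hcs : c (2 * m + 1) = c 0 := by
    rw [hc]
    rw [← hw1len, SimpleGraph.Walk.getVert_length, SimpleGraph.Walk.getVert_zero]
  have hcinj0 := ProdPancyclic.cycle_getVert_injOn hw₁.isCycle
  have hcinj : ∀ i, i < 2 * m + 1 → ∀ j, j < 2 * m + 1 → c i = c j → i = j :=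
    fun i hi j hj hij => hcinj0 i (by omega) j (by omega) hij
  have hpadj : ∀ j, j + 1 < n → G₂.Adj (p j) (p (j+1)) := fun j hj =>
    w₂.adj_getVert_succ (by omega)
  have hpinj0 := ProdPancyclic.path_getVert_injOn hw₂.isPath
  have hpinj : ∀ i, i < n → ∀ j, j < n → p i = p j → i = j :=
    fun i hi j hj hij => hpinj0 i (by omega) j (by omega) hij
  have hqn_of_lt : ∀ q : ℕ, (2*m+1) * q + 1 ≤ n * (2*m+1) → q < n := by
    intro q hlt
    by_contra hcon
    push_neg at hcon
    have h5 : (2*m+1) * n ≤ (2*m+1) * q := Nat.mul_le_mul_left _ hcon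
    have h6 : (2*m+1) * n = n * (2*m+1) := Nat.mul_comm _ _
    omega
  constructor
  · intro k hk1 hk2
    have hspos : 0 < 2 * m + 1 := by omega
    have hk : (2*m+1) * (k / (2*m+1)) + k % (2*m+1) = k := Nat.div_add_mod k (2*m+1)
    set q := k / (2*m+1) with hqdef
    set r := k % (2*m+1) with hrdef
    have hr : r < 2*m+1 := Nat.mod_lt _ hspos
    have hq1 : 1 ≤ q := by
      rcases Nat.eq_zero_or_pos q with h0 | h0
    -- if q = 0 then k = r < s, contradiction
      · rw [h0, Nat.mul_zero] at hk; omega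
      · exact h0
    have hqn : q ≤ n := by
      by_contra hcon
      push_neg at hcon
      have h5 : (2*m+1) * (n+1) ≤ (2*m+1) * q := Nat.mul_le_mul_left _ (by omega)
      have h6 : (2*m+1) * (n+1) = n * (2*m+1) + (2*m+1) := by ring
      omega
    have hqltn : 0 < r → q < n := fun hr0 => hqn_of_lt q (by omega)
    rcases eq_or_ne (r % 2) 0 with hpar | hpar
    · -- r even : bigList m q (r/2) 0
      have ha : r / 2 ≤ m := by omega
      have hL := cycle_of_natList hcadj hcs hcinj hpadj hpinj
        (bigList m q (r/2) 0) (bigList_ne_nil m q (r/2) 0 hq1)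
        (bigList_chain' (2*m+1) m q (r/2) 0 hm hq1 rfl)
        (bigList_nodup m q (r/2) 0 hq1)
        (by rw [length_bigList m q (r/2) 0 hq1 ha (by omega)]
            have e : q * (2*m+1) = (2*m+1) * q := Nat.mul_comm _ _
            omega)
        (by
          intro x hx
          obtain ⟨hx1, hx2⟩ := bigList_bounds hq1 hx
          refine ⟨by omega, ?_⟩
          rcases hx2 with h | ⟨h0, h⟩ | ⟨h0, h⟩
          · omega
          · have := hqltn (by omega)
            omega
          · omega)
        (bigList_closing (2*m+1) m q (r/2) 0 hm hq1 rfl _)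
      have hlen : (bigList m q (r/2) 0).length = k := by
        rw [length_bigList m q (r/2) 0 hq1 ha (by omega)]
        have : q * (2*m+1) = (2*m+1) * q := Nat.mul_comm _ _
        omega
      rw [hlen] at hL
      exact hL.1
    · -- r odd
      rcases eq_or_ne q 1 with hq1' | hq1'
      · -- rectangle case : k = (2m+1) + r, r odd
        have hrodd : r % 2 = 1 := by omega
        have hr0 : 0 < r := by omega
        have hn2 : 2 ≤ n := by have := hqltn hr0; omega
        have hr2m : r ≤ 2*m - 1 := by omega
        set h : ℕ := m + (r-1)/2 with hhdef
        have hh1 : h + 1 < 2*m+1 := by omega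
        have hL := cycle_of_natList hcadj hcs hcinj hpadj hpinj
          (rectList h) (rectList_ne_nil h)
          (rectList_chain' (2*m+1) h hh1)
          (rectList_nodup h)
          (by rw [rectList_length]; omega)
          (by
            intro x hx
            obtain ⟨hx1, hx2⟩ := rectList_bounds hx
            exact ⟨by omega, by omega⟩)
          (rectList_closing (2*m+1) h _)
        have hlen : (rectList h).length = k := by
          rw [rectList_length]
          rw [hq1', Nat.mul_one] at hk
          omega
        rw [hlen] at hL
        exact hL.1
      · -- bigList m (q-1) m ((r+1)/2)
        have hq2 : 2 ≤ q := by omega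
        have hrodd : r % 2 = 1 := by omega
        have hq11 : 1 ≤ q - 1 := by omega
        have ha2 : (r+1)/2 ≤ m := by omega
        have ha20 : 0 < (r+1)/2 := by omega
        have hqltn' : q < n := hqltn (by omega)
        have hL := cycle_of_natList hcadj hcs hcinj hpadj hpinj
          (bigList m (q-1) m ((r+1)/2)) (bigList_ne_nil m (q-1) m ((r+1)/2) hq11)
          (bigList_chain' (2*m+1) m (q-1) m ((r+1)/2) hm hq11 rfl)
          (bigList_nodup m (q-1) m ((r+1)/2) hq11)
          (by rw [length_bigList m (q-1) m ((r+1)/2) hq11 le_rfl ha2]; omega)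
          (by
            intro x hx
            obtain ⟨hx1, hx2⟩ := bigList_bounds hq11 hx
            refine ⟨by omega, ?_⟩
            rcases hx2 with hh | ⟨h0, hh⟩ | ⟨h0, hh⟩ <;> omega)
          (bigList_closing (2*m+1) m (q-1) m ((r+1)/2) hm hq11 rfl _)
        have hlen : (bigList m (q-1) m ((r+1)/2)).length = k := by
          rw [length_bigList m (q-1) m ((r+1)/2) hq11 le_rfl ha2]
          obtain ⟨Q, hQ⟩ : ∃ Q, q = Q + 1 := ⟨q - 1, by omega⟩
          have e1 : q - 1 = Q := by omega
          have e2 : (2*m+1) * (Q+1) = Q * (2*m+1) + (2*m+1) := by ring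
          rw [e1]
          rw [hQ] at hk
          omega
        rw [hlen] at hL
        exact hL.1
  · -- Hamiltonian cycle : bigList m n 0 0
    have hcsurj : ∀ z : V₁, ∃ i, i < 2*m+1 ∧ c i = z := by
      intro z
      obtain ⟨i, hgv, hile⟩ := SimpleGraph.Walk.mem_support_iff_exists_getVert.mp
        (hw₁.mem_support z)
      rcases eq_or_ne i (2*m+1) with rfl | hne
      · exact ⟨0, by omega, by rw [← hcs]; exact hgv⟩
      · exact ⟨i, by omega, hgv⟩
    have hpsurj : ∀ z : V₂, ∃ j, j < n ∧ p j = z := by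
      intro z
      obtain ⟨j, hgv, hjle⟩ := SimpleGraph.Walk.mem_support_iff_exists_getVert.mp
        (hw₂.mem_support z)
      exact ⟨j, by omega, hgv⟩
    have hL := cycle_of_natList hcadj hcs hcinj hpadj hpinj
      (bigList m n 0 0) (bigList_ne_nil m n 0 0 hn)
      (bigList_chain' (2*m+1) m n 0 0 hm hn rfl)
      (bigList_nodup m n 0 0 hn)
      (by rw [length_bigList m n 0 0 hn (by omega) le_rfl]
          have : 3 ≤ n * (2*m+1) := le_trans hs3 (Nat.le_mul_of_pos_left _ (by omega))
          omega)
      (by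
        intro x hx
        obtain ⟨hx1, hx2⟩ := bigList_bounds hn hx
        refine ⟨by omega, ?_⟩
        rcases hx2 with h | ⟨h0, h⟩ | ⟨h0, h⟩ <;> omega)
      (bigList_closing (2*m+1) m n 0 0 hm hn rfl _)
    obtain ⟨-, v, w, hcyc, hsupp⟩ := hL
    refine ⟨v, w, ?_⟩
    rw [SimpleGraph.Walk.isHamiltonianCycle_iff_isCycle_and_support_count_tail_eq_one]
    refine ⟨hcyc, ?_⟩
    intro x
    rw [hsupp]
    have hnd : (w.support.tail).Nodup := hcyc.support_nodup
    rw [hsupp] at hnd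
    apply @List.count_eq_one_of_mem _ instBEqOfDecidableEq _ _ _ hnd
    obtain ⟨i, hi, hci⟩ := hcsurj x.1
    obtain ⟨j, hj, hpj⟩ := hpsurj x.2
    rw [List.mem_map]
    refine ⟨(i, j), bigList_coverage hm hn i j (by omega) hj, ?_⟩
    rw [Prod.ext_iff]
    exact ⟨hci, hpj⟩
end

section
/- Let G₁ be a pancyclic graph of odd order and G₂ a graph containing a Hamiltonian path. Then the Cartesian product G₁ × G₂ is pancyclic. -/
open SimpleGraph

namespace StmtAux4


variable {V : Type*} {G : SimpleGraph V}

/-- Walk along a function. -/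
def walkOfFn (G : SimpleGraph V) (f : ℕ → V) :
    (n : ℕ) → (∀ i, i < n → G.Adj (f i) (f (i+1))) → G.Walk (f 0) (f n)
  | 0, _ => SimpleGraph.Walk.nil
  | (n+1), h => (walkOfFn G f n fun i hi => h i (by omega)).concat (h n (by omega))

lemma walkOfFn_length (f : ℕ → V) (n : ℕ) (h : ∀ i, i < n → G.Adj (f i) (f (i+1))) :
    (walkOfFn G f n h).length = n := by
  induction n with
  | zero => rfl
  | succ n ih => simp [walkOfFn, Walk.length_concat, ih]

lemma walkOfFn_support (f : ℕ → V) (n : ℕ) (h : ∀ i, i < n → G.Adj (f i) (f (i+1))) :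
    (walkOfFn G f n h).support = (List.range (n+1)).map f := by
  induction n with
  | zero => simp [walkOfFn, List.range_succ]
  | succ n ih =>
      rw [walkOfFn, Walk.support_concat, ih, List.range_succ (n := n+1)]
      simp

lemma walkOfFn_edges (f : ℕ → V) (n : ℕ) (h : ∀ i, i < n → G.Adj (f i) (f (i+1))) :
    (walkOfFn G f n h).edges = (List.range n).map (fun i => s(f i, f (i+1))) := by
  induction n with
  | zero => simp [walkOfFn]
  | succ n ih =>
      rw [walkOfFn, Walk.edges_concat, ih, List.range_succ (n := n)]
      simp

lemma hasCycleLength_of_fn (G : SimpleGraph V) (k : ℕ) (hk : 3 ≤ k) (f : ℕ → V)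
    (hinj : ∀ i j, i < k → j < k → f i = f j → i = j)
    (hadj : ∀ i, i + 1 < k → G.Adj (f i) (f (i+1)))
    (hcl : G.Adj (f (k-1)) (f 0)) : hasCycleLength G k := by
  have hadj' : ∀ i, i < k - 1 → G.Adj (f i) (f (i+1)) := fun i hi => hadj i (by omega)
  have hcl' : G.Adj (f (k-1)) (f 0) := hcl
  refine ⟨f 0, (walkOfFn G f (k-1) hadj').concat hcl', ?_, ?_⟩
  · rw [Walk.isCycle_def]
    refine ⟨⟨?_⟩, Walk.concat_ne_nil _ _, ?_⟩
    · -- edges nodup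
      rw [Walk.edges_concat, walkOfFn_edges]
      apply List.Nodup.concat
      · intro hmem
        obtain ⟨i, hi, hei⟩ := List.mem_map.mp hmem
        rw [List.mem_range] at hi
        rcases Sym2.eq_iff.mp hei with ⟨h1, h2⟩ | ⟨h1, h2⟩
        · have := hinj i (k-1) (by omega) (by omega) h1
          omega
        · have := hinj i 0 (by omega) (by omega) h1
          have := hinj (i+1) (k-1) (by omega) (by omega) h2
          omega
      · refine List.Nodup.map_on ?_ List.nodup_range
        intro i hi j hj he
        rw [List.mem_range] at hi hj
        rcases Sym2.eq_iff.mp he with ⟨h1, h2⟩ | ⟨h1, h2⟩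
        · exact hinj i j (by omega) (by omega) h1
        · have := hinj i (j+1) (by omega) (by omega) h1
          have := hinj (i+1) j (by omega) (by omega) h2
          omega
    · -- support tail nodup
      rw [Walk.support_concat, walkOfFn_support]
      have hk1 : k - 1 + 1 = k := by omega
      rw [hk1]
      obtain ⟨k', rfl⟩ : ∃ k', k = k' + 1 := ⟨k - 1, by omega⟩
      rw [List.range_succ_eq_map]
      simp only [List.map_cons, List.concat_eq_append, List.cons_append, List.tail_cons,
        List.map_map]
      rw [List.nodup_append']
      refine ⟨?_, List.nodup_singleton _, ?_⟩
      · refine List.Nodup.map_on ?_ List.nodup_range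
        intro i hi j hj he
        rw [List.mem_range] at hi hj
        have := hinj (i+1) (j+1) (by omega) (by omega) he
        omega
      · intro a ha hb
        simp only [List.mem_singleton] at hb
        subst hb
        obtain ⟨i, hi, hei⟩ := List.mem_map.mp ha
        rw [List.mem_range] at hi
        have := hinj (i+1) 0 (by omega) (by omega) hei
        omega
  · rw [Walk.length_concat, walkOfFn_length]
    omega

lemma getVert_eq_support_getElem {u v : V} (w : G.Walk u v) (i : ℕ) (hi : i ≤ w.length) :
    w.getVert i = w.support[i]'(by rw [Walk.length_support]; omega) := by
  induction w generalizing i with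
  | nil =>
      simp only [Walk.length_nil, Nat.le_zero] at hi
      subst hi; rfl
  | cons h q ih =>
      cases i with
      | zero => rfl
      | succ i =>
          simp only [Walk.support_cons, List.getElem_cons_succ, Walk.getVert_cons_succ]
          exact ih i (by simpa [Nat.succ_le_succ_iff] using hi)

/-- Extract a cyclically-adjacent injective indexing function from a cycle. -/
lemma fn_of_hasCycleLength {k : ℕ} (hk : 3 ≤ k) (h : hasCycleLength G k) :
    ∃ f : ℕ → V, (∀ i j, i < k → j < k → f i = f j → i = j)
      ∧ (∀ i, i + 1 < k → G.Adj (f i) (f (i+1))) ∧ G.Adj (f (k-1)) (f 0) := by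
  obtain ⟨v, w, hc, hl⟩ := h
  have htail := hc.2
  have hinj' : ∀ i j, 1 ≤ i → i ≤ k → 1 ≤ j → j ≤ k → w.getVert i = w.getVert j → i = j := by
    intro i j hi1 hik hj1 hjk he
    obtain ⟨i', rfl⟩ : ∃ i', i = i' + 1 := ⟨i - 1, by omega⟩
    obtain ⟨j', rfl⟩ : ∃ j', j = j' + 1 := ⟨j - 1, by omega⟩
    rw [getVert_eq_support_getElem w _ (by omega), getVert_eq_support_getElem w _ (by omega)] at he
    have hsup := w.support_eq_cons
    have hlen : w.support.length = k + 1 := by rw [Walk.length_support]; omega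
    have htl : w.support.tail.length = k := by
      rw [hsup] at hlen; simpa using hlen
    have he2 : w.support.tail[i']'(by omega) = w.support.tail[j']'(by omega) := by
      simpa using he
    have := (htail.getElem_inj_iff (hi := by omega) (hj := by omega)).mp he2
    omega
  refine ⟨w.getVert, ?_, ?_, ?_⟩
  · intro i j hi hj he
    have h0 : w.getVert 0 = w.getVert k := by
      rw [Walk.getVert_zero, ← hl, Walk.getVert_length]
    rcases Nat.eq_zero_or_pos i with rfl | hi1
    · rcases Nat.eq_zero_or_pos j with rfl | hj1
      · rfl
      · exfalso
        rw [h0] at he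
        have := hinj' k j (by omega) le_rfl (by omega) (by omega) he
        omega
    · rcases Nat.eq_zero_or_pos j with rfl | hj1
      · exfalso
        rw [h0] at he
        have := hinj' i k (by omega) (by omega) (by omega) le_rfl he
        omega
      · exact hinj' i j (by omega) (by omega) (by omega) (by omega) he
  · intro i hi
    exact w.adj_getVert_succ (by omega)
  · have := w.adj_getVert_succ (i := k - 1) (by omega)
    have hk1 : k - 1 + 1 = k := by omega
    rw [hk1] at this
    have h0 : w.getVert k = w.getVert 0 := by
      rw [Walk.getVert_zero, ← hl, Walk.getVert_length]
    rwa [h0] at this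


/-- A self-avoiding corner-to-corner path in the `m × r` grid with `L` steps. -/
structure GoodPath (m r L : ℕ) (x y : ℕ → ℕ) : Prop where
  x0 : x 0 = 0
  y0 : y 0 = 0
  xL : x L = m - 1
  yL : y L = 0
  xbound : ∀ i, i ≤ L → x i ≤ m - 1
  ybound : ∀ i, i ≤ L → y i ≤ r - 1
  step : ∀ i, i < L →
    (x (i+1) = x i ∧ (y (i+1) = y i + 1 ∨ y i = y (i+1) + 1)) ∨
    (y (i+1) = y i ∧ (x (i+1) = x i + 1 ∨ x i = x (i+1) + 1))
  inj : ∀ i j, i ≤ L → j ≤ L → x i = x j → y i = y j → i = j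

lemma goodPath_straight (m r : ℕ) (hm : 3 ≤ m) (hr : 1 ≤ r) :
    ∃ x y, GoodPath m r (m-1) x y := by
  refine ⟨fun i => i, fun _ => 0, ?_, rfl, rfl, rfl, ?_, ?_, ?_, ?_⟩ <;>
    intros <;> omega

lemma goodPath_fam2 (m r L : ℕ) (hm : 3 ≤ m) (hmodd : m % 2 = 1) (hr : 2 ≤ r)
    (hLpar : L % 2 = 0) (h1 : m < L) (h2 : L < 2*m) :
    ∃ x y, GoodPath m r L x y := by
  refine ⟨fun i => if i ≤ 2*(L-m)+1 then i/2 else i - (L-m) - 1,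
          fun i => if i ≤ 2*(L-m)+1 then (if (i+3) % 4 ≤ 1 then 1 else 0) else 0,
          ?_, ?_, ?_, ?_, ?_, ?_, ?_, ?_⟩
  · split_ifs <;> omega
  · split_ifs <;> omega
  · split_ifs <;> omega
  · split_ifs <;> omega
  · intro i hi; split_ifs <;> omega
  · intro i hi; split_ifs <;> omega
  · intro i hi; split_ifs <;> omega
  · intro i j hi hj hx hy; split_ifs at hx hy <;> omega

lemma goodPath_fam3 (m r L : ℕ) (hm : 3 ≤ m) (hmodd : m % 2 = 1) (hr : 3 ≤ r)
    (hLpar : L % 2 = 0) (h1 : 2*m ≤ L) (h2 : L < 3*m) :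
    ∃ x y, GoodPath m r L x y := by
  refine ⟨fun i => if i ≤ 2 then 0 else if i ≤ (L-m-1)/2 + 2 then i - 2
            else if i ≤ 2*((L-m-1)/2) + 2 then 2*((L-m-1)/2) + 3 - i else i - 2*((L-m-1)/2) - 2,
          fun i => if i ≤ 2 then i else if i ≤ (L-m-1)/2 + 2 then 2
            else if i ≤ 2*((L-m-1)/2) + 2 then 1 else 0,
          ?_, ?_, ?_, ?_, ?_, ?_, ?_, ?_⟩
  · split_ifs <;> omega
  · split_ifs <;> omega
  · split_ifs <;> omega
  · split_ifs <;> omega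
  · intro i hi; split_ifs <;> omega
  · intro i hi; split_ifs <;> omega
  · intro i hi; split_ifs <;> omega
  · intro i j hi hj hx hy; split_ifs at hx hy <;> omega


set_option maxHeartbeats 2000000 in
lemma goodPath_add2rows {m r L : ℕ} {x y : ℕ → ℕ} (hm : 3 ≤ m) (hr : 4 ≤ r)
    (h : GoodPath m (r-2) L x y) :
    ∃ x' y', GoodPath m r (L + 2*m) x' y' := by
  have hL1 : 1 ≤ L := by
    rcases Nat.eq_zero_or_pos L with h0 | h0
    · have e1 := h.xL
      have e2 := h.x0
      rw [h0] at e1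
      omega
    · exact h0
  have hx0 := h.x0
  have hy0 := h.y0
  have hxL := h.xL
  have hyL := h.yL
  refine ⟨fun i => if i ≤ 1 then 0 else if i ≤ L+2 then x (i-2)
            else if i ≤ L+m+1 then L+m+2-i else i-L-m-1,
          fun i => if i ≤ 1 then i else if i ≤ L+2 then y (i-2) + 2
            else if i ≤ L+m+1 then 1 else 0,
          ?_, ?_, ?_, ?_, ?_, ?_, ?_, ?_⟩
  · split_ifs <;> omega
  · split_ifs <;> omega
  · split_ifs <;> omega
  · split_ifs <;> omega
  · intro i hi
    split_ifs <;> first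
      | omega
      | (have := h.xbound (i-2) (by omega); omega)
  · intro i hi
    split_ifs <;> first
      | omega
      | (have := h.ybound (i-2) (by omega); omega)
  · intro i hi
    rcases (show i = 0 ∨ i = 1 ∨ (2 ≤ i ∧ i ≤ L+1) ∨ i = L+2 ∨ (L+3 ≤ i ∧ i ≤ L+m)
        ∨ i = L+m+1 ∨ (L+m+2 ≤ i ∧ i < L+2*m) by omega) with
      h0 | h0 | ⟨h0, h0'⟩ | h0 | ⟨h0, h0'⟩ | h0 | ⟨h0, h0'⟩
    · subst h0; split_ifs <;> omega
    · subst h0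
      simp only [show 1+1-2 = 0 from rfl]
      split_ifs <;> omega
    · have e : i+1-2 = (i-2)+1 := by omega
      simp only [e]
      rcases h.step (i-2) (by omega) with ⟨ha, hb | hb⟩ | ⟨ha, hb | hb⟩ <;>
        split_ifs <;> omega
    · subst h0
      have e : L+2-2 = L := by omega
      simp only [e]
      split_ifs <;> omega
    · split_ifs <;> omega
    · subst h0; split_ifs <;> omega
    · split_ifs <;> omega
  · intro i j hi hj hx hy
    split_ifs at hx hy <;> first
      | omega
      | (have := h.inj (i-2) (j-2) (by omega) (by omega) hx (by omega); omega)

lemma goodPath_exists (m : ℕ) (hm : 3 ≤ m) (hmodd : m % 2 = 1) :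
    ∀ L, L % 2 = 0 → m - 1 ≤ L → ∀ r, L ≤ m * r - 1 → ∃ x y, GoodPath m r L x y := by
  intro L
  induction L using Nat.strong_induction_on with
  | _ L IH =>
    intro hLpar hLlow r hLr
    have hmr : L + 1 ≤ m * r := by
      rcases Nat.eq_zero_or_pos (m * r) with h0 | h0 <;> omega
    have hr1 : 1 ≤ r := by
      by_contra hc
      have hr0 : r = 0 := by omega
      rw [hr0, Nat.mul_zero] at hmr; omega
    by_cases hA : L ≤ m
    · have hL : L = m - 1 := by omega
      rw [hL]; exact goodPath_straight m r hm hr1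
    · have hr2 : 2 ≤ r := by
        by_contra hc
        have hr0 : r = 1 := by omega
        rw [hr0, Nat.mul_one] at hmr; omega
      by_cases hB : L < 2*m
      · exact goodPath_fam2 m r L hm hmodd hr2 hLpar (by omega) hB
      · have hr3 : 3 ≤ r := by
          by_contra hc
          have hr0 : r = 2 := by omega
          rw [hr0] at hmr; omega
        by_cases hC : L < 3*m
        · exact goodPath_fam3 m r L hm hmodd hr3 hLpar (by omega) hC
        · have hr4 : 4 ≤ r := by
            by_contra hc
            have hr0 : r = 3 := by omega
            rw [hr0] at hmr; omega
          have hmul : m * r = m * (r-2) + m * 2 := by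
            rw [← Nat.mul_add]
            congr 1
            omega
          obtain ⟨x, y, hgp⟩ := IH (L - 2*m) (by omega) (by omega) (by omega) (r-2) (by omega)
          obtain ⟨x', y', h'⟩ := goodPath_add2rows hm hr4 hgp
          rw [show L - 2*m + 2*m = L by omega] at h'
          exact ⟨x', y', h'⟩

lemma fn_of_path {V : Type*} {G : SimpleGraph V} {u v : V} (w : G.Walk u v) (hw : w.IsPath) :
    ∃ f : ℕ → V, (∀ i j, i ≤ w.length → j ≤ w.length → f i = f j → i = j)
      ∧ (∀ i, i < w.length → G.Adj (f i) (f (i+1))) := by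
  refine ⟨w.getVert, ?_, fun i hi => w.adj_getVert_succ hi⟩
  intro i j hi hj he
  rw [getVert_eq_support_getElem w i hi, getVert_eq_support_getElem w j hj] at he
  exact (hw.support_nodup.getElem_inj_iff (hi := by rw [SimpleGraph.Walk.length_support]; omega)
    (hj := by rw [SimpleGraph.Walk.length_support]; omega)).mp he

lemma box_adj_step {V₁ V₂ : Type*} {G₁ : SimpleGraph V₁} {G₂ : SimpleGraph V₂} {m n : ℕ}
    {c : ℕ → V₁} {p : ℕ → V₂}
    (cadj : ∀ a, a + 1 < m → G₁.Adj (c a) (c (a+1)))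
    (padj : ∀ b, b + 1 < n → G₂.Adj (p b) (p (b+1)))
    {a₁ b₁ a₂ b₂ : ℕ} (ha₁ : a₁ < m) (hb₁ : b₁ < n) (ha₂ : a₂ < m) (hb₂ : b₂ < n)
    (hstep : (a₂ = a₁ ∧ (b₂ = b₁ + 1 ∨ b₁ = b₂ + 1)) ∨
      (b₂ = b₁ ∧ (a₂ = a₁ + 1 ∨ a₁ = a₂ + 1))) :
    (G₁ □ G₂).Adj (c a₁, p b₁) (c a₂, p b₂) := by
  rcases hstep with ⟨ha, hb | hb⟩ | ⟨hb, ha | ha⟩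
  · subst ha; subst hb
    exact SimpleGraph.boxProd_adj_right.mpr (padj b₁ (by omega))
  · subst ha; subst hb
    exact SimpleGraph.boxProd_adj_right.mpr (padj b₂ (by omega)).symm
  · subst hb; subst ha
    exact SimpleGraph.boxProd_adj_left.mpr (cadj a₁ (by omega))
  · subst hb; subst ha
    exact SimpleGraph.boxProd_adj_left.mpr (cadj a₂ (by omega)).symm


end StmtAux4

open StmtAux4 in
theorem stmt4 {V₁ V₂ : Type*} [Fintype V₁] [Fintype V₂] [DecidableEq V₂]
    (G₁ : SimpleGraph V₁) (G₂ : SimpleGraph V₂)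
    (hodd : Odd (Fintype.card V₁)) (h3 : 3 ≤ Fintype.card V₁)
    (hpanc : Pancyclic G₁)
    (hpath : ∃ (u v : V₂) (p : G₂.Walk u v), p.IsHamiltonian) :
    Pancyclic (G₁ □ G₂) := by
  classical
  intro k hk3 hkN
  obtain ⟨u, v, pw, hpw⟩ := hpath
  set m := Fintype.card V₁ with hmdef
  set n := Fintype.card V₂ with hndef
  have hne : Nonempty V₂ := ⟨u⟩
  have hn1 : 1 ≤ n := Fintype.card_pos
  have hmodd : m % 2 = 1 := Nat.odd_iff.mp hodd
  have hkmn : k ≤ m * n := by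
    rw [Fintype.card_prod] at hkN
    exact hkN
  obtain ⟨p, hpinj0, hpadj0⟩ := fn_of_path pw hpw.isPath
  have hplen : pw.length = n - 1 := hpw.length_eq
  rw [hplen] at hpinj0 hpadj0
  have hpinj : ∀ i j, i < n → j < n → p i = p j → i = j :=
    fun i j hi hj => hpinj0 i j (by omega) (by omega)
  have hpadj : ∀ b, b + 1 < n → G₂.Adj (p b) (p (b+1)) :=
    fun b hb => hpadj0 b (by omega)
  by_cases hkm : k ≤ m
  · -- small k : cycle inside one layer
    obtain ⟨f, finj, fadj, fcl⟩ := fn_of_hasCycleLength hk3 (hpanc k hk3 hkm)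
    apply hasCycleLength_of_fn _ k hk3 (fun i => (f i, p 0))
    · intro i j hi hj he
      exact finj i j hi hj (congrArg Prod.fst he)
    · intro i hi
      exact SimpleGraph.boxProd_adj_left.mpr (fadj i hi)
    · exact SimpleGraph.boxProd_adj_left.mpr fcl
  · have hn2 : 2 ≤ n := by
      by_contra hc
      have hn0 : n = 1 := by omega
      rw [hn0, Nat.mul_one] at hkmn; omega
    obtain ⟨c, cinj, cadj, ccl⟩ := fn_of_hasCycleLength h3 (hpanc m h3 le_rfl)
    have cinj' : ∀ a b, a ≤ m - 1 → b ≤ m - 1 → c a = c b → a = b :=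
      fun a b ha hb => cinj a b (by omega) (by omega)
    rcases Nat.even_or_odd k with hke | hko
    · -- k even
      obtain ⟨s, hs⟩ : ∃ s, k = 2 * s := hke.exists_two_nsmul k
      by_cases hk2m : k < 2*m
      · -- rectangle on rows 0,1
        have hsm : s ≤ m - 1 := by omega
        apply hasCycleLength_of_fn _ k hk3
          (fun i => if i < s then (c i, p 0) else (c (2*s - 1 - i), p 1))
        · intro i j hi hj he
          split_ifs at he <;> rw [Prod.mk.injEq] at he <;> obtain ⟨he1, he2⟩ := he
          · exact cinj' i j (by omega) (by omega) he1
          · have := hpinj 0 1 (by omega) (by omega) he2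
            omega
          · have := hpinj 1 0 (by omega) (by omega) he2
            omega
          · have := cinj' (2*s-1-i) (2*s-1-j) (by omega) (by omega) he1
            omega
        · intro i hi
          rcases (show (i+1 < s) ∨ (i+1 = s) ∨ (s ≤ i ∧ i+1 < 2*s) by omega) with h0 | h0 | ⟨h0, h0'⟩
          · rw [if_pos (by omega : i < s), if_pos h0]
            exact SimpleGraph.boxProd_adj_left.mpr (cadj i (by omega))
          · rw [if_pos (by omega : i < s), if_neg (by omega : ¬ i + 1 < s),
              show 2*s - 1 - (i+1) = i by omega]
            exact SimpleGraph.boxProd_adj_right.mpr (hpadj 0 (by omega))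
          · rw [if_neg (by omega : ¬ i < s), if_neg (by omega : ¬ i + 1 < s),
              show 2*s - 1 - i = (2*s - 1 - (i+1)) + 1 by omega]
            exact SimpleGraph.boxProd_adj_left.mpr (cadj (2*s-1-(i+1)) (by omega)).symm
        · rw [if_neg (by omega : ¬ k - 1 < s), if_pos (by omega : (0:ℕ) < s),
            show 2*s - 1 - (k-1) = 0 by omega]
          exact SimpleGraph.boxProd_adj_right.mpr (hpadj 0 (by omega)).symm
      · -- big even k
        obtain ⟨x, y, gp⟩ := goodPath_exists m h3 hmodd (k-m-1) (by omega) (by omega) (n-1)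
          (by
            have hmul : m * n = m * (n-1) + m := by
              rw [← Nat.mul_succ]
              congr 1
              omega
            omega)
        apply hasCycleLength_of_fn _ k hk3
          (fun i => if i < m then (c (m-1-i), p 0) else (c (x (i-m)), p (y (i-m) + 1)))
        · intro i j hi hj he
          split_ifs at he <;> rw [Prod.mk.injEq] at he <;> obtain ⟨he1, he2⟩ := he
          · have := cinj' (m-1-i) (m-1-j) (by omega) (by omega) he1
            omega
          · have hyb := gp.ybound (j-m) (by omega)
            have := hpinj 0 (y (j-m) + 1) (by omega) (by omega) he2
            omega
          · have hyb := gp.ybound (i-m) (by omega)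
            have := hpinj (y (i-m) + 1) 0 (by omega) (by omega) he2
            omega
          · have hxb1 := gp.xbound (i-m) (by omega)
            have hxb2 := gp.xbound (j-m) (by omega)
            have hyb1 := gp.ybound (i-m) (by omega)
            have hyb2 := gp.ybound (j-m) (by omega)
            have hex := cinj' (x (i-m)) (x (j-m)) (by omega) (by omega) he1
            have hey := hpinj (y (i-m) + 1) (y (j-m) + 1) (by omega) (by omega) he2
            have := gp.inj (i-m) (j-m) (by omega) (by omega) hex (by omega)
            omega
        · intro i hi
          rcases (show (i+1 < m) ∨ (i+1 = m) ∨ (m ≤ i ∧ i+1 < k) by omega) with h0 | h0 | ⟨h0, h0'⟩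
          · rw [if_pos (by omega : i < m), if_pos h0,
              show m - 1 - i = (m - 1 - (i+1)) + 1 by omega]
            exact SimpleGraph.boxProd_adj_left.mpr (cadj (m-1-(i+1)) (by omega)).symm
          · rw [if_pos (by omega : i < m), if_neg (by omega : ¬ i + 1 < m),
              show m - 1 - i = 0 by omega, show i + 1 - m = 0 by omega, gp.x0, gp.y0]
            exact SimpleGraph.boxProd_adj_right.mpr (hpadj 0 (by omega))
          · rw [if_neg (by omega : ¬ i < m), if_neg (by omega : ¬ i + 1 < m),
              show i + 1 - m = (i - m) + 1 by omega]
            have hxb1 := gp.xbound (i-m) (by omega)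
            have hxb2 := gp.xbound (i-m+1) (by omega)
            have hyb1 := gp.ybound (i-m) (by omega)
            have hyb2 := gp.ybound (i-m+1) (by omega)
            apply box_adj_step cadj hpadj (by omega) (by omega) (by omega) (by omega)
            rcases gp.step (i-m) (by omega) with ⟨h1, h2 | h2⟩ | ⟨h1, h2 | h2⟩ <;> omega
        · rw [if_neg (by omega : ¬ k - 1 < m), if_pos (by omega : (0:ℕ) < m),
            show k - 1 - m = k - m - 1 by omega, gp.xL, gp.yL,
            show m - 1 - 0 = m - 1 by omega]
          exact SimpleGraph.boxProd_adj_right.mpr (hpadj 0 (by omega)).symm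
    · -- k odd
      obtain ⟨x, y, gp⟩ := goodPath_exists m h3 hmodd (k-1)
        (by obtain ⟨t, ht⟩ := hko; omega) (by omega) n (by omega)
      apply hasCycleLength_of_fn _ k hk3 (fun i => (c (x i), p (y i)))
      · intro i j hi hj he
        rw [Prod.mk.injEq] at he
        obtain ⟨he1, he2⟩ := he
        have hxb1 := gp.xbound i (by omega)
        have hxb2 := gp.xbound j (by omega)
        have hyb1 := gp.ybound i (by omega)
        have hyb2 := gp.ybound j (by omega)
        exact gp.inj i j (by omega) (by omega)
          (cinj' (x i) (x j) (by omega) (by omega) he1)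
          (hpinj (y i) (y j) (by omega) (by omega) he2)
      · intro i hi
        have hxb1 := gp.xbound i (by omega)
        have hxb2 := gp.xbound (i+1) (by omega)
        have hyb1 := gp.ybound i (by omega)
        have hyb2 := gp.ybound (i+1) (by omega)
        apply box_adj_step cadj hpadj (by omega) (by omega) (by omega) (by omega)
        rcases gp.step i (by omega) with ⟨h1, h2 | h2⟩ | ⟨h1, h2 | h2⟩ <;> omega
      · rw [gp.xL, gp.yL, gp.x0, gp.y0]
        exact SimpleGraph.boxProd_adj_left.mpr ccl
end

section
/- If q is a prime with q ≡ 1 (mod 4) and q ≠ 5, then the Paley graph P(q) is pancyclic. -/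
open SimpleGraph

namespace PaleyAux

def SAdj (a b : ℕ) : Prop :=
  ∃ t : ℕ, 0 < t ∧ t ≤ 5 ∧ ((a : ℤ) - b = (t:ℤ)^2 ∨ (b : ℤ) - a = (t:ℤ)^2)

lemma sadj_of {a b : ℕ} (h : b = a + 1 ∨ b = a + 4 ∨ a = b + 1 ∨ a = b + 4) : SAdj a b := by
  rcases h with h | h | h | h
  · exact ⟨1, by omega, by omega, Or.inr (by subst h; push_cast; ring)⟩
  · exact ⟨2, by omega, by omega, Or.inr (by subst h; push_cast; ring)⟩
  · exact ⟨1, by omega, by omega, Or.inl (by subst h; push_cast; ring)⟩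
  · exact ⟨2, by omega, by omega, Or.inl (by subst h; push_cast; ring)⟩

lemma paley_adj {q : ℕ} [Fact q.Prime] (hq : 13 ≤ q) {a b : ℕ} (h : SAdj a b) :
    (paley (ZMod q)).Adj (a : ZMod q) (b : ZMod q) := by
  haveI : NeZero q := ⟨by omega⟩
  obtain ⟨t, ht0, ht5, heq⟩ := h
  have htq : (t : ZMod q) ≠ 0 := by
    rw [Ne, ZMod.natCast_eq_zero_iff]
    intro hdvd
    have := Nat.le_of_dvd ht0 hdvd
    omega
  have key : ∀ x y : ℕ, (x : ℤ) - y = (t:ℤ)^2 →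
      (x : ZMod q) - (y : ZMod q) = (t : ZMod q)^2 := by
    intro x y hxy
    have := congrArg (fun z : ℤ => (z : ZMod q)) hxy
    push_cast at this
    simpa using this
  have hne : (a : ZMod q) ≠ (b : ZMod q) := by
    intro hab
    have ht2 : (t : ZMod q)^2 ≠ 0 := pow_ne_zero 2 htq
    rcases heq with h' | h'
    · exact ht2 (by rw [← key a b h', hab, sub_self])
    · exact ht2 (by rw [← key b a h', hab, sub_self])
  rw [paley, fromRel_adj]
  refine ⟨hne, ?_⟩
  rcases heq with h' | h'
  · exact Or.inl ⟨(t : ZMod q), by rw [key a b h', sq]⟩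
  · exact Or.inr ⟨(t : ZMod q), by rw [key b a h', sq]⟩

variable {V : Type*} {G : SimpleGraph V}

def mkWalk (G : SimpleGraph V) (b : V) : (a : V) → (l : List V) →
    List.Chain G.Adj a (l ++ [b]) → G.Walk a b
  | _, [], h => Walk.cons (List.isChain_pair.mp h) Walk.nil
  | _, c :: l, h =>
      Walk.cons (List.rel_of_chain_cons h) (mkWalk G b c l (List.chain_of_chain_cons h))

lemma length_mkWalk (b a : V) (l : List V) (h) : (mkWalk G b a l h).length = l.length + 1 := by
  induction l generalizing a with
  | nil => rfl
  | cons c l ih => simp [mkWalk]; exact ih _ _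

lemma support_mkWalk (b a : V) (l : List V) (h) :
    (mkWalk G b a l h).support = a :: (l ++ [b]) := by
  induction l generalizing a with
  | nil => rfl
  | cons c l ih => simp [mkWalk]; exact ih _ _

lemma not_mem_edges_rev {u v : V} (p : G.Walk u v) (hp : p.IsPath) (hl : 2 ≤ p.length) :
    s(v, u) ∉ p.edges := by
  intro hmem
  cases p with
  | nil => simp at hmem
  | @cons _ w _ h p =>
    rw [Walk.edges_cons, List.mem_cons] at hmem
    rcases hmem with hmem | hmem
    · rw [Sym2.eq_iff] at hmem
      rcases hmem with ⟨rfl, rfl⟩ | ⟨rfl, -⟩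
      · rw [Walk.isPath_iff_eq_nil] at hp
        simp at hp
      · have hp' := (Walk.cons_isPath_iff _ _).mp hp
        rw [Walk.isPath_iff_eq_nil] at hp'
        rcases hp' with ⟨rfl, -⟩
        simp at hl
    · have hu := Walk.snd_mem_support_of_mem_edges p hmem
      exact ((Walk.cons_isPath_iff _ _).mp hp).2 hu

lemma cycle_of_list (G : SimpleGraph V) (a c : V) (l : List V)
    (hnd : (a :: c :: l).Nodup) (hch : List.Chain G.Adj a ((c :: l) ++ [a]))
    (hl : l ≠ []) :
    ∃ w : G.Walk a a, w.IsCycle ∧ w.length = l.length + 2 := by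
  have hadj : G.Adj a c := List.rel_of_chain_cons hch
  set p := mkWalk G a c l (List.chain_of_chain_cons hch) with hpdef
  have hsup : p.support = c :: (l ++ [a]) := support_mkWalk _ _ _ _
  have hplen : p.length = l.length + 1 := length_mkWalk _ _ _ _
  have hpath : p.IsPath := by
    rw [Walk.isPath_def, hsup]
    have hperm : (a :: c :: l).Perm (c :: (l ++ [a])) := by
      refine (List.Perm.swap c a l).trans ?_
      exact List.Perm.cons c (List.perm_append_singleton a l).symm
    exact hperm.nodup hnd
  refine ⟨Walk.cons hadj p, ?_, by simp [hplen]⟩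
  rw [Walk.cons_isCycle_iff]
  refine ⟨hpath, ?_⟩
  have : 0 < l.length := List.length_pos_iff.mpr hl
  exact not_mem_edges_rev p hpath (by omega)

lemma hasCycle_of_nat {q : ℕ} [Fact q.Prime] (hq : 13 ≤ q) (a : ℕ) (l : List ℕ)
    (hch : List.Chain SAdj a (l ++ [a])) (hnd : (a :: l).Nodup)
    (hb : ∀ x ∈ a :: l, x < q) (hl2 : 2 ≤ l.length) :
    hasCycleLength (paley (ZMod q)) (l.length + 1) := by
  haveI : NeZero q := ⟨by omega⟩
  obtain ⟨c, l', rfl⟩ : ∃ c l', l = c :: l' := by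
    cases l with
    | nil => simp at hl2
    | cons c l' => exact ⟨c, l', rfl⟩
  have hchZ : List.Chain (paley (ZMod q)).Adj ((a : ℕ) : ZMod q)
      (((c :: l') ++ [a]).map (Nat.cast : ℕ → ZMod q)) :=
    List.isChain_map_of_isChain _ (fun x y h => paley_adj hq h) hch
  have hndZ : ((a :: c :: l').map (Nat.cast : ℕ → ZMod q)).Nodup := by
    refine List.Nodup.map_on ?_ hnd
    intro x hx y hy hxy
    have hxq : x < q := hb x hx
    have hyq : y < q := hb y hy
    have := congrArg ZMod.val hxy
    rwa [ZMod.val_natCast_of_lt hxq, ZMod.val_natCast_of_lt hyq] at this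
  simp only [List.map_cons, List.map_append, List.map_cons, List.map_nil] at hchZ hndZ
  obtain ⟨w, hw, hlen⟩ := cycle_of_list (paley (ZMod q)) ((a : ℕ) : ZMod q) (c : ZMod q)
    (l'.map (Nat.cast : ℕ → ZMod q)) hndZ (by simpa using hchZ) (by simp; rintro rfl; simp at hl2)
  exact ⟨_, w, hw, by simpa using hlen⟩

def Inv (m : ℕ) (P Q : List ℕ) : Prop :=
  List.Chain SAdj (m+1) (P ++ [m+2]) ∧
  List.Chain SAdj (m+3) (Q ++ [m]) ∧
  (P ++ Q).Nodup ∧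
  (∀ x ∈ P ++ Q, x < m) ∧
  P.length + Q.length = m

lemma inv_step {m : ℕ} {P Q : List ℕ} (h : Inv m P Q) :
    Inv (m+2) (Q ++ [m]) ((m+1) :: P) := by
  obtain ⟨hA, hB, hnd, hb, hlen⟩ := h
  have hmP : (m : ℕ) ∉ P := fun hc => by have := hb m (by simp [hc]); omega
  have hmQ : (m : ℕ) ∉ Q := fun hc => by have := hb m (by simp [hc]); omega
  have hm1P : (m+1) ∉ P := fun hc => by have := hb (m+1) (by simp [hc]); omega
  have hm1Q : (m+1) ∉ Q := fun hc => by have := hb (m+1) (by simp [hc]); omega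
  refine ⟨?_, ?_, ?_, ?_, ?_⟩
  · rw [show m + 2 + 1 = m + 3 from by omega, show m + 2 + 2 = m + 4 from by omega,
      List.append_assoc, show ([m] ++ [m+4] : List ℕ) = m :: [m+4] from rfl,
      List.Chain, List.isChain_cons_split]
    exact ⟨hB, List.isChain_pair.mpr (sadj_of (by omega))⟩
  · rw [show m + 2 + 3 = m + 5 from by omega, List.cons_append, List.Chain, List.isChain_cons_cons]
    exact ⟨sadj_of (by omega), hA⟩
  · have hperm : ((Q ++ [m]) ++ (m+1) :: P).Perm (m :: (m+1) :: (P ++ Q)) := by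
      rw [List.append_assoc, show ([m] ++ (m+1) :: P : List ℕ) = m :: (m+1) :: P from rfl]
      refine (List.perm_append_comm).trans ?_
      simp only [List.cons_append]
      exact List.Perm.refl _
    rw [hperm.nodup_iff]
    simp only [List.nodup_cons, List.mem_cons, List.mem_append]
    refine ⟨?_, ?_, hnd⟩
    · rintro (h | h | h) <;> first
        | omega
        | (have := hb m (by simp [h]); omega)
    · rintro (h | h) <;> (have := hb (m+1) (by simp [h]); omega)
  · intro x hx
    have hx' : x ∈ Q ∨ x = m ∨ x = m + 1 ∨ x ∈ P := by
      simpa using hx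
    rcases hx' with h | h | h | h
    · have := hb x (by simp [h]); omega
    · omega
    · omega
    · have := hb x (by simp [h]); omega
  · simp only [List.length_append, List.length_cons, List.length_nil]
    omega

lemma inv_base_odd : Inv 1 [] [0] := by
  refine ⟨?_, ?_, by simp, by simp, by simp⟩
  · exact List.isChain_pair.mpr (sadj_of (by omega))
  · exact List.Chain.cons (sadj_of (by omega))
      (List.Chain.cons (sadj_of (by omega)) List.Chain.nil)

lemma inv_base_even : Inv 4 [] [3,2,1,0] := by
  refine ⟨?_, ?_, by simp, by decide, by simp⟩
  · exact List.isChain_pair.mpr (sadj_of (by omega))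
  · exact List.Chain.cons (sadj_of (by omega)) (List.Chain.cons (sadj_of (by omega))
      (List.Chain.cons (sadj_of (by omega)) (List.Chain.cons (sadj_of (by omega))
      (List.Chain.cons (sadj_of (by omega)) List.Chain.nil))))

lemma inv_odd (n : ℕ) : ∃ P Q, Inv (1 + 2*n) P Q := by
  induction n with
  | zero => exact ⟨[], [0], inv_base_odd⟩
  | succ n ih =>
    obtain ⟨P, Q, h⟩ := ih
    have h2 := inv_step h
    rw [show (1 + 2*n) + 2 = 1 + 2*(n+1) from by omega] at h2
    exact ⟨_, _, h2⟩

lemma inv_even (n : ℕ) : ∃ P Q, Inv (4 + 2*n) P Q := by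
  induction n with
  | zero => exact ⟨[], [3,2,1,0], inv_base_even⟩
  | succ n ih =>
    obtain ⟨P, Q, h⟩ := ih
    have h2 := inv_step h
    rw [show (4 + 2*n) + 2 = 4 + 2*(n+1) from by omega] at h2
    exact ⟨_, _, h2⟩

lemma inv_cycle {q : ℕ} [Fact q.Prime] (hq13 : 13 ≤ q) {m : ℕ} {P Q : List ℕ}
    (h : Inv m P Q) (hmq : m + 4 ≤ q) :
    hasCycleLength (paley (ZMod q)) (m + 4) := by
  obtain ⟨hA, hB, hnd, hb, hlen⟩ := h
  have hmain := hasCycle_of_nat hq13 m ((m+1) :: (P ++ (m+2) :: (m+3) :: Q)) ?_ ?_ ?_ ?_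
  · rw [show ((m+1) :: (P ++ (m+2) :: (m+3) :: Q)).length + 1 = m + 4 from by
      simp only [List.length_cons, List.length_append]; omega] at hmain
    exact hmain
  · -- chain
    rw [List.cons_append, List.Chain, List.isChain_cons_cons, List.append_assoc]
    refine ⟨sadj_of (by omega), ?_⟩
    rw [show ((m+2) :: (m+3) :: Q ++ [m] : List ℕ) = (m+2) :: (m+3) :: (Q ++ [m]) from by simp,
      List.isChain_cons_append_cons_cons]
    exact ⟨hA, sadj_of (by omega), hB⟩
  · -- nodup
    have hperm : (m :: (m+1) :: (P ++ (m+2) :: (m+3) :: Q)).Perm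
        (m :: (m+1) :: (m+2) :: (m+3) :: (P ++ Q)) := by
      refine List.Perm.cons _ (List.Perm.cons _ ?_)
      exact List.perm_middle.trans (List.Perm.cons _ List.perm_middle)
    rw [hperm.nodup_iff]
    simp only [List.nodup_cons, List.mem_cons, List.mem_append]
    refine ⟨?_, ?_, ?_, ?_, hnd⟩
    · rintro (h | h | h | h | h) <;> first
        | omega
        | (have := hb m (by simp [h]); omega)
    · rintro (h | h | h | h) <;> first
        | omega
        | (have := hb (m+1) (by simp [h]); omega)
    · rintro (h | h | h) <;> first
        | omega
        | (have := hb (m+2) (by simp [h]); omega)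
    · rintro (h | h) <;> (have := hb (m+3) (by simp [h]); omega)
  · -- bound
    intro x hx
    simp only [List.mem_cons, List.mem_append] at hx
    rcases hx with h | h | h | h | h | h
    · omega
    · omega
    · have := hb x (by simp [h]); omega
    · omega
    · omega
    · have := hb x (by simp [h]); omega
  · simp only [List.length_cons, List.length_append]
    omega


end PaleyAux

open PaleyAux in
theorem stmt5 (q : ℕ) [Fact q.Prime] (hq4 : q % 4 = 1) (hq5 : q ≠ 5) :
    ∀ k, 3 ≤ k → k ≤ q → hasCycleLength (paley (ZMod q)) k := by
  intro k hk3 hkq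
  have hp : q.Prime := Fact.out
  have hq13 : 13 ≤ q := by
    rcases (show q = 1 ∨ q = 5 ∨ q = 9 ∨ 13 ≤ q from by omega) with rfl | rfl | rfl | h
    · exact absurd hp (by norm_num)
    · exact absurd rfl hq5
    · exact absurd hp (by norm_num)
    · exact h
  by_cases h3 : k = 3
  · subst h3
    have a1 : (paley (ZMod q)).Adj ((0 : ℕ) : ZMod q) ((9 : ℕ) : ZMod q) :=
      paley_adj hq13 ⟨3, by omega, by omega, Or.inr (by norm_num)⟩
    have a2 : (paley (ZMod q)).Adj ((9 : ℕ) : ZMod q) ((25 : ℕ) : ZMod q) :=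
      paley_adj hq13 ⟨4, by omega, by omega, Or.inr (by norm_num)⟩
    have a3 : (paley (ZMod q)).Adj ((25 : ℕ) : ZMod q) ((0 : ℕ) : ZMod q) :=
      paley_adj hq13 ⟨5, by omega, by omega, Or.inl (by norm_num)⟩
    obtain ⟨w, hw, hlen⟩ := cycle_of_list (paley (ZMod q)) ((0 : ℕ) : ZMod q)
      ((9 : ℕ) : ZMod q) [((25 : ℕ) : ZMod q)]
      (by
        have h1 : ((0 : ℕ) : ZMod q) ≠ ((9 : ℕ) : ZMod q) := a1.ne
        have h2 : ((0 : ℕ) : ZMod q) ≠ ((25 : ℕ) : ZMod q) := a3.ne'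
        have h3 : ((9 : ℕ) : ZMod q) ≠ ((25 : ℕ) : ZMod q) := a2.ne
        push_cast at h1 h2 h3
        simp [h1, h2, h3])
      (List.Chain.cons a1 (List.Chain.cons a2 (List.Chain.cons a3 List.Chain.nil)))
      (by simp)
    exact ⟨_, w, hw, by simpa using hlen⟩
  by_cases h4 : k = 4
  · subst h4
    have := hasCycle_of_nat hq13 0 [1, 5, 9] ?_ (by decide) ?_ (by simp)
    · simpa using this
    · refine List.Chain.cons (sadj_of (by omega)) (List.Chain.cons (sadj_of (by omega))
        (List.Chain.cons (sadj_of (by omega))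
        (List.Chain.cons ⟨3, by omega, by omega, Or.inl (by norm_num)⟩ List.Chain.nil)))
    · intro x hx
      have : x = 0 ∨ x = 1 ∨ x = 5 ∨ x = 9 := by simpa using hx
      omega
  by_cases h6 : k = 6
  · subst h6
    have := hasCycle_of_nat hq13 0 [4, 5, 6, 2, 1] ?_ (by decide) ?_ (by simp)
    · simpa using this
    · refine List.Chain.cons (sadj_of (by omega)) (List.Chain.cons (sadj_of (by omega))
        (List.Chain.cons (sadj_of (by omega)) (List.Chain.cons (sadj_of (by omega))
        (List.Chain.cons (sadj_of (by omega))
        (List.Chain.cons (sadj_of (by omega)) List.Chain.nil)))))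
    · intro x hx
      have : x = 0 ∨ x = 4 ∨ x = 5 ∨ x = 6 ∨ x = 2 ∨ x = 1 := by simpa using hx
      omega
  rcases Nat.even_or_odd k with he | ho
  · obtain ⟨j, hj⟩ := he
    obtain ⟨n, hn⟩ : ∃ n, k = 8 + 2 * n := ⟨(k - 8) / 2, by omega⟩
    obtain ⟨P, Q, hinv⟩ := inv_even n
    have := inv_cycle hq13 hinv (by omega)
    rwa [show 4 + 2 * n + 4 = k from by omega] at this
  · obtain ⟨j, hj⟩ := ho
    obtain ⟨n, hn⟩ : ∃ n, k = 5 + 2 * n := ⟨(k - 5) / 2, by omega⟩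
    obtain ⟨P, Q, hinv⟩ := inv_odd n
    have := inv_cycle hq13 hinv (by omega)
    rwa [show 1 + 2 * n + 4 = k from by omega] at this
end

section
/- The Paley graph P(q), for q ≡ 1 (mod 4) a prime power, is strongly regular with parameters (q, (q-1)/2, (q-5)/4, (q-1)/4): it is (q-1)/2-regular, any two adjacent vertices have exactly (q-5)/4 common neighbors, and any two distinct non-adjacent vertices have exactly (q-1)/4 common neighbors. -/
open SimpleGraph Finset

set_option linter.unusedSectionVars false
set_option maxHeartbeats 1000000

section aux
variable {F : Type*} [Field F] [Fintype F] [DecidableEq F] (h4 : Fintype.card F % 4 = 1)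

include h4 in
private lemma hF2 : ringChar F ≠ 2 := by
  intro h
  have := (FiniteField.even_card_iff_char_two (F := F)).mp h
  omega

include h4 in
private lemma chi_neg_one : quadraticChar F (-1) = 1 := by
  rw [quadraticChar_one_iff_isSquare (by simp)]
  rw [FiniteField.isSquare_neg_one_iff]
  omega

include h4 in
private lemma chi_sub_comm (a b : F) :
    quadraticChar F (a - b) = quadraticChar F (b - a) := by
  rw [show a - b = -1 * (b - a) by ring, map_mul, chi_neg_one h4, one_mul]

include h4 in
private lemma paley_adj {a b : F} :
    (paley F).Adj a b ↔ a ≠ b ∧ quadraticChar F (a - b) = 1 := by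
  have hs : ∀ x y : F, IsSquare (x - y) → IsSquare (y - x) := by
    intro x y h
    have : y - x = -1 * (x - y) := by ring
    rw [this]
    exact (((FiniteField.isSquare_neg_one_iff (F := F)).mpr (by omega)).mul h)
  constructor
  · rintro ⟨hne, h | h⟩
    · exact ⟨hne, (quadraticChar_one_iff_isSquare (sub_ne_zero.mpr hne)).mpr h⟩
    · exact ⟨hne, (quadraticChar_one_iff_isSquare (sub_ne_zero.mpr hne)).mpr (hs _ _ h)⟩
  · rintro ⟨hne, h⟩
    exact ⟨hne, Or.inl ((quadraticChar_one_iff_isSquare (sub_ne_zero.mpr hne)).mp h)⟩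

/-- the doubly punctured universe -/
private def Sp (F : Type*) [Field F] [Fintype F] [DecidableEq F] : Finset F :=
  univ \ {0, 1}

private lemma mem_Sp {z : F} : z ∈ Sp F ↔ z ≠ 0 ∧ z ≠ 1 := by
  simp [Sp]

private lemma card_Sp : (Sp F).card = Fintype.card F - 2 := by
  rw [Sp, card_sdiff_of_subset (subset_univ _), card_univ, card_pair (by norm_num : (0:F) ≠ 1)]

private lemma sum_split (f : F → ℤ) :
    ∑ z ∈ Sp F, f z = (∑ z : F, f z) - f 0 - f 1 := by
  rw [Sp, Finset.sum_sdiff_eq_sub (subset_univ _),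
    Finset.sum_pair (by norm_num : (0:F) ≠ 1)]
  ring

include h4 in
private lemma sumA : ∑ z ∈ Sp F, quadraticChar F z = -1 := by
  rw [sum_split, quadraticChar_sum_zero (hF2 h4)]
  simp

include h4 in
private lemma sumB : ∑ z ∈ Sp F, quadraticChar F (z - 1) = -1 := by
  rw [sum_split]
  have : ∑ z : F, quadraticChar F (z - 1) = ∑ z : F, quadraticChar F z :=
    Fintype.sum_equiv (Equiv.subRight 1) _ _ (fun _ => rfl)
  rw [this, quadraticChar_sum_zero (hF2 h4)]
  simp [chi_neg_one h4]

include h4 in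
private lemma sumC :
    ∑ z ∈ Sp F, quadraticChar F z * quadraticChar F (z - 1) = -1 := by
  have key : ∀ z ∈ Sp F, quadraticChar F z * quadraticChar F (z - 1)
      = quadraticChar F (1 - z⁻¹) := by
    intro z hz
    obtain ⟨hz0, hz1⟩ := mem_Sp.mp hz
    rw [← map_mul]
    have : z * (z - 1) = z ^ 2 * (1 - z⁻¹) := by
      field_simp
    rw [this, map_mul, quadraticChar_sq_one' hz0, one_mul]
  rw [Finset.sum_congr rfl key]
  have := sumA (F := F) h4
  rw [← this]
  apply Finset.sum_nbij' (fun z => 1 - z⁻¹) (fun w => (1 - w)⁻¹)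
  · intro z hz
    obtain ⟨hz0, hz1⟩ := mem_Sp.mp hz
    rw [mem_Sp]
    constructor
    · intro h
      exact hz1 (inv_eq_one.mp (sub_eq_zero.mp h).symm)
    · intro h
      have : z⁻¹ = 0 := by linear_combination -h
      exact hz0 (inv_eq_zero.mp this)
  · intro w hw
    obtain ⟨hw0, hw1⟩ := mem_Sp.mp hw
    rw [mem_Sp]
    have h1w : (1 : F) - w ≠ 0 := sub_ne_zero.mpr (Ne.symm hw1)
    constructor
    · exact inv_ne_zero h1w
    · intro h
      exact hw0 (sub_eq_self.mp (inv_eq_one.mp h))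
  · intro z hz
    obtain ⟨hz0, hz1⟩ := mem_Sp.mp hz
    field_simp
    ring
  · intro w hw
    obtain ⟨hw0, hw1⟩ := mem_Sp.mp hw
    have h1w : (1 : F) - w ≠ 0 := sub_ne_zero.mpr (Ne.symm hw1)
    field_simp
    ring
  · intro z hz; rfl

include h4 in
private lemma count4 (ε δ : ℤ) (hε : ε = 1 ∨ ε = -1) (hδ : δ = 1 ∨ δ = -1) :
    (4:ℤ) * (((Sp F).filter
        (fun z => quadraticChar F z = ε ∧ quadraticChar F (z-1) = δ)).card : ℤ)
      = (Fintype.card F : ℤ) - 2 - ε - δ - ε*δ := by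
  have hε2 : ε * ε = 1 := by rcases hε with h | h <;> simp [h]
  have hδ2 : δ * δ = 1 := by rcases hδ with h | h <;> simp [h]
  have expand : ∑ z ∈ Sp F, (1 + ε * quadraticChar F z) * (1 + δ * quadraticChar F (z-1))
      = (Fintype.card F : ℤ) - 2 - ε - δ - ε*δ := by
    have step : ∀ z ∈ Sp F,
        (1 + ε * quadraticChar F z) * (1 + δ * quadraticChar F (z-1))
        = 1 + (ε * quadraticChar F z + (δ * quadraticChar F (z-1)
            + (ε*δ) * (quadraticChar F z * quadraticChar F (z-1)))) := by
      intro z _; ring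
    rw [Finset.sum_congr rfl step, Finset.sum_add_distrib, Finset.sum_add_distrib,
      Finset.sum_add_distrib, ← Finset.mul_sum, ← Finset.mul_sum, ← Finset.mul_sum,
      sumA h4, sumB h4, sumC h4, Finset.sum_const, card_Sp]
    have h2 : (2:ℕ) ≤ Fintype.card F := Fintype.one_lt_card
    rw [nsmul_eq_mul, Nat.cast_sub h2]
    push_cast
    ring
  rw [← expand, ← Finset.sum_filter_add_sum_filter_not (Sp F)
    (fun z => quadraticChar F z = ε ∧ quadraticChar F (z-1) = δ)]
  have hl : ∀ z ∈ (Sp F).filter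
      (fun z => quadraticChar F z = ε ∧ quadraticChar F (z-1) = δ),
      (1 + ε * quadraticChar F z) * (1 + δ * quadraticChar F (z-1)) = 4 := by
    intro z hz
    obtain ⟨_, h1, h2⟩ := Finset.mem_filter.mp hz
    rw [h1, h2, hε2, hδ2]
    norm_num
  have hr : ∀ z ∈ (Sp F).filter
      (fun z => ¬(quadraticChar F z = ε ∧ quadraticChar F (z-1) = δ)),
      (1 + ε * quadraticChar F z) * (1 + δ * quadraticChar F (z-1)) = 0 := by
    intro z hz
    obtain ⟨hzS, hn⟩ := Finset.mem_filter.mp hz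
    obtain ⟨hz0, hz1⟩ := mem_Sp.mp hzS
    have d1 := quadraticChar_dichotomy hz0
    have d2 := quadraticChar_dichotomy (sub_ne_zero.mpr hz1)
    rcases d1 with h1 | h1 <;> rcases d2 with h2 | h2 <;>
      rcases hε with he | he <;> rcases hδ with hd | hd <;>
      simp [h1, h2, he, hd] at hn ⊢
  rw [Finset.sum_congr rfl hl, Finset.sum_congr rfl hr,
    Finset.sum_const, Finset.sum_const]
  simp [mul_comm]

include h4 in
private lemma count2 :
    (2:ℤ) * ((univ.filter (fun z : F => z ≠ 0 ∧ quadraticChar F z = 1)).card : ℤ)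
      = (Fintype.card F : ℤ) - 1 := by
  classical
  set S0 : Finset F := univ.filter (fun z : F => z ≠ 0) with hS0
  have hsum0 : ∑ z ∈ S0, quadraticChar F z = 0 := by
    rw [hS0, Finset.filter_ne' univ 0,
      Finset.sum_erase _ (by simp), quadraticChar_sum_zero (hF2 h4)]
  have hcard0 : S0.card = Fintype.card F - 1 := by
    rw [hS0, Finset.filter_ne' univ 0, Finset.card_erase_of_mem (mem_univ 0), card_univ]
  have hff : univ.filter (fun z : F => z ≠ 0 ∧ quadraticChar F z = 1)
      = S0.filter (fun z => quadraticChar F z = 1) := by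
    rw [hS0, Finset.filter_filter]
  rw [hff]
  have expand : ∑ z ∈ S0, (1 + quadraticChar F z) = (Fintype.card F : ℤ) - 1 := by
    rw [Finset.sum_add_distrib, hsum0, Finset.sum_const, hcard0, nsmul_eq_mul,
      Nat.cast_sub Fintype.card_pos]
    push_cast
    ring
  rw [← expand, ← Finset.sum_filter_add_sum_filter_not S0
    (fun z => quadraticChar F z = 1)]
  have hl : ∀ z ∈ S0.filter (fun z => quadraticChar F z = 1),
      (1 + quadraticChar F z) = 2 := by
    intro z hz
    rw [(Finset.mem_filter.mp hz).2]
    norm_num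
  have hr : ∀ z ∈ S0.filter (fun z => ¬quadraticChar F z = 1),
      (1 + quadraticChar F z) = 0 := by
    intro z hz
    obtain ⟨hz0, hn⟩ := Finset.mem_filter.mp hz
    have hz0' : z ≠ 0 := (Finset.mem_filter.mp hz0).2
    rcases quadraticChar_dichotomy hz0' with h | h <;> simp [h] at hn ⊢
  rw [Finset.sum_congr rfl hl, Finset.sum_congr rfl hr,
    Finset.sum_const, Finset.sum_const]
  simp [mul_comm]

include h4 in
private lemma inter_card (u v : F) (hne : u ≠ v) (e : ℤ)
    (he : quadraticChar F (u - v) = e) :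
    Nat.card (((paley F).neighborSet u ∩ (paley F).neighborSet v : Set F))
      = (((Sp F).filter
        (fun z => quadraticChar F z = e ∧ quadraticChar F (z-1) = e)).card) := by
  set d : F := u - v with hd
  have hd0 : d ≠ 0 := sub_ne_zero.mpr hne
  have hedich : e = 1 ∨ e = -1 := he ▸ quadraticChar_dichotomy hd0
  have he2 : e * e = 1 := by rcases hedich with h | h <;> simp [h]
  have hset : ((paley F).neighborSet u ∩ (paley F).neighborSet v : Set F)
      = ↑(univ.filter (fun x : F => x ≠ u ∧ x ≠ v ∧
          quadraticChar F (x - u) = 1 ∧ quadraticChar F (x - v) = 1)) := by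
    ext x
    simp only [Set.mem_inter_iff, SimpleGraph.mem_neighborSet, paley_adj h4,
      Finset.coe_filter, Set.mem_setOf_eq, mem_univ, true_and]
    rw [chi_sub_comm h4 u x, chi_sub_comm h4 v x]
    constructor
    · rintro ⟨⟨h1, h2⟩, h3, h4⟩; exact ⟨h1.symm, h3.symm, h2, h4⟩
    · rintro ⟨h1, h2, h3, h4⟩; exact ⟨⟨h1.symm, h3⟩, h2.symm, h4⟩
  rw [hset, Nat.card_coe_set_eq, Set.ncard_coe_finset]
  apply Finset.card_nbij' (fun x => (x - v) * d⁻¹) (fun z => z * d + v)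
  · intro x hx
    simp only [Finset.mem_coe] at hx ⊢
    obtain ⟨hxu, hxv, hcu, hcv⟩ := (Finset.mem_filter.mp hx).2
    set z : F := (x - v) * d⁻¹ with hz
    have key1 : z * d = x - v := by
      rw [hz, mul_assoc, inv_mul_cancel₀ hd0, mul_one]
    have key2 : (z - 1) * d = x - u := by
      rw [sub_mul, key1, one_mul, hd]; ring
    rw [Finset.mem_filter, mem_Sp]
    refine ⟨⟨?_, ?_⟩, ?_, ?_⟩
    · intro h
      rw [h, zero_mul] at key1
      exact hxv (sub_eq_zero.mp key1.symm)
    · intro h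
      rw [h, sub_self, zero_mul] at key2
      exact hxu (sub_eq_zero.mp key2.symm)
    · have : quadraticChar F z * e = 1 := by
        rw [← he, ← map_mul, key1, hcv]
      linear_combination e * this - quadraticChar F z * he2
    · have : quadraticChar F (z - 1) * e = 1 := by
        rw [← he, ← map_mul, key2, hcu]
      linear_combination e * this - quadraticChar F (z - 1) * he2
  · intro w hw
    simp only [Finset.mem_coe] at hw ⊢
    obtain ⟨hwS, hcw, hcw1⟩ := Finset.mem_filter.mp hw
    obtain ⟨hw0, hw1⟩ := mem_Sp.mp hwS
    have key1 : w * d + v - v = w * d := by ring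
    have key2 : w * d + v - u = (w - 1) * d := by rw [hd]; ring
    rw [Finset.mem_filter]
    refine ⟨mem_univ _, ?_, ?_, ?_, ?_⟩
    · intro h
      rw [sub_eq_zero.mpr h] at key2
      exact (mul_ne_zero (sub_ne_zero.mpr hw1) hd0) key2.symm
    · intro h
      rw [sub_eq_zero.mpr h] at key1
      exact (mul_ne_zero hw0 hd0) key1.symm
    · rw [key2, map_mul, hcw1, he]
      exact he2
    · rw [key1, map_mul, hcw, he]
      exact he2
  · intro x hx
    beta_reduce
    rw [mul_assoc, inv_mul_cancel₀ hd0, mul_one]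
    ring
  · intro w hw
    beta_reduce
    rw [add_sub_cancel_right, mul_assoc, mul_inv_cancel₀ hd0, mul_one]
end aux

theorem stmt7 {F : Type*} [Field F] [Fintype F] (h4 : Fintype.card F % 4 = 1) :
    (∀ v : F, Nat.card ((paley F).neighborSet v) = (Fintype.card F - 1) / 2) ∧
    (∀ u v : F, (paley F).Adj u v →
      Nat.card (((paley F).neighborSet u ∩ (paley F).neighborSet v : Set F)) =
        (Fintype.card F - 5) / 4) ∧
    (∀ u v : F, u ≠ v → ¬ (paley F).Adj u v →
      Nat.card (((paley F).neighborSet u ∩ (paley F).neighborSet v : Set F)) =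
        (Fintype.card F - 1) / 4) := by
  classical
  have hq5 : 5 ≤ Fintype.card F := by
    have : 1 < Fintype.card F := Fintype.one_lt_card
    omega
  refine ⟨?_, ?_, ?_⟩
  · intro v
    have hset : (paley F).neighborSet v
        = ↑(univ.filter (fun x : F => x ≠ v ∧ quadraticChar F (x - v) = 1)) := by
      ext x
      simp only [SimpleGraph.mem_neighborSet, paley_adj h4,
        Finset.coe_filter, Set.mem_setOf_eq, mem_univ, true_and]
      rw [chi_sub_comm h4 v x]
      constructor
      · rintro ⟨h1, h2⟩; exact ⟨h1.symm, h2⟩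
      · rintro ⟨h1, h2⟩; exact ⟨h1.symm, h2⟩
    rw [hset, Nat.card_coe_set_eq, Set.ncard_coe_finset]
    have hbij : (univ.filter (fun x : F => x ≠ v ∧ quadraticChar F (x - v) = 1)).card
        = (univ.filter (fun z : F => z ≠ 0 ∧ quadraticChar F z = 1)).card := by
      apply Finset.card_nbij' (fun x => x - v) (fun z => z + v)
      · intro x hx
        obtain ⟨_, h1, h2⟩ := Finset.mem_filter.mp hx
        exact Finset.mem_filter.mpr ⟨mem_univ _, sub_ne_zero.mpr h1, h2⟩
      · intro z hz
        obtain ⟨_, h1, h2⟩ := Finset.mem_filter.mp hz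
        refine Finset.mem_filter.mpr ⟨mem_univ _, ?_, by simpa using h2⟩
        intro h
        exact h1 (by linear_combination h)
      · intro x hx; ring
      · intro z hz; ring
    rw [hbij]
    have := count2 h4
    omega
  · intro u v huv
    obtain ⟨hne, hsq⟩ := (paley_adj h4).mp huv
    rw [inter_card h4 u v hne 1 hsq]
    have := count4 h4 1 1 (Or.inl rfl) (Or.inl rfl)
    omega
  · intro u v hne hnadj
    have hsq : quadraticChar F (u - v) = -1 := by
      rcases quadraticChar_dichotomy (sub_ne_zero.mpr hne) with h | h
      · exact absurd ((paley_adj h4).mpr ⟨hne, h⟩) hnadj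
      · exact h
    rw [inter_card h4 u v hne (-1) hsq]
    have := count4 h4 (-1) (-1) (Or.inr rfl) (Or.inr rfl)
    omega
end

section
/- Let q = q₀ⁿ with q₀ prime, q ≡ 1 (mod 4), and let 𝔽_q be viewed as an 𝔽_{q₀}-vector space with a basis f₀,…,f_{n−1} consisting of nonzero squares. Let W₀ = span(f₀) and W* = span(f₁,…,f_{n−1}), and let G_{W₀}, G_{W*} be the induced subgraphs of P(q) on W₀ and W* respectively. Then the Cartesian product G_{W₀} × G_{W*} is a spanning subgraph of P(q), under the identification (α₀, α*) ↦ α₀ + α*. -/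
open SimpleGraph

theorem stmt11 (q₀ n : ℕ) [Fact q₀.Prime] (hn : 0 < n)
    {F : Type*} [Field F] [Fintype F] [Algebra (ZMod q₀) F]
    (hcard : Fintype.card F = q₀ ^ n) (h4 : Fintype.card F % 4 = 1)
    (b : Module.Basis (Fin n) (ZMod q₀) F) (hb : ∀ i, b i ≠ 0 ∧ IsSquare (b i))
    (W₀ Wstar : Submodule (ZMod q₀) F)
    (hW₀ : W₀ = Submodule.span (ZMod q₀) {b ⟨0, hn⟩})
    (hWstar : Wstar = Submodule.span (ZMod q₀) (b '' {i | i ≠ ⟨0, hn⟩})) :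
    Function.Bijective
      (fun p : ↥(W₀ : Set F) × ↥(Wstar : Set F) => (p.1 : F) + (p.2 : F)) ∧
    ∀ p q : ↥(W₀ : Set F) × ↥(Wstar : Set F),
      ((paley F).induce (W₀ : Set F) □ (paley F).induce (Wstar : Set F)).Adj p q →
      (paley F).Adj ((p.1 : F) + (p.2 : F)) ((q.1 : F) + (q.2 : F)) := by
  have hdis : Disjoint W₀ Wstar := by
    have h := b.linearIndependent.disjoint_span_image
      (s := {(⟨0, hn⟩ : Fin n)}) (t := {i | i ≠ ⟨0, hn⟩}) (by simp [Set.disjoint_left])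
    rw [hW₀, hWstar]
    simpa [Set.image_singleton] using h
  have hsup : W₀ ⊔ Wstar = ⊤ := by
    rw [hW₀, hWstar, ← Submodule.span_union]
    have : ({b ⟨0, hn⟩} ∪ b '' {i | i ≠ ⟨0, hn⟩}) = Set.range b := by
      rw [← Set.image_singleton, ← Set.image_union]
      have : ({(⟨0, hn⟩ : Fin n)} ∪ {i | i ≠ ⟨0, hn⟩}) = Set.univ := by
        ext i; by_cases h : i = ⟨0, hn⟩ <;> simp [h]
      rw [this, Set.image_univ]
    rw [this, b.span_eq]
  refine ⟨⟨?_, ?_⟩, ?_⟩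
  · rintro ⟨⟨a, ha⟩, ⟨c, hc⟩⟩ ⟨⟨a', ha'⟩, ⟨c', hc'⟩⟩ h
    simp only at h
    have h1 : a - a' = c' - c := by linear_combination h
    have hm1 : a - a' ∈ W₀ := sub_mem ha ha'
    have hm2 : a - a' ∈ Wstar := h1 ▸ sub_mem hc' hc
    have h0 : a - a' = 0 := by
      have := Submodule.disjoint_def.mp hdis _ hm1 hm2
      exact this
    have ha2 : a = a' := by linear_combination h0
    have hc2 : c = c' := by linear_combination h - h0
    simp [Prod.ext_iff, Subtype.ext_iff, ha2, hc2]
  · intro x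
    have hx : x ∈ W₀ ⊔ Wstar := hsup ▸ Submodule.mem_top
    obtain ⟨a, ha, c, hc, rfl⟩ := Submodule.mem_sup.mp hx
    exact ⟨(⟨a, ha⟩, ⟨c, hc⟩), rfl⟩
  · rintro ⟨⟨a, ha⟩, ⟨c, hc⟩⟩ ⟨⟨a', ha'⟩, ⟨c', hc'⟩⟩ h
    rw [SimpleGraph.boxProd_adj] at h
    simp only [SimpleGraph.comap_adj, paley, SimpleGraph.fromRel_adj, Subtype.ext_iff,
      Function.Embedding.coe_subtype] at h ⊢
    rcases h with ⟨⟨hne, hsq⟩, heq⟩ | ⟨⟨hne, hsq⟩, heq⟩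
    · subst heq
      constructor
      · intro hcontra; exact hne (by linear_combination hcontra)
      · rcases hsq with h | h
        · exact Or.inl (by have e : a + c - (a' + c) = a - a' := by ring
                           rw [e]; exact h)
        · exact Or.inr (by have e : a' + c - (a + c) = a' - a := by ring
                           rw [e]; exact h)
    · subst heq
      constructor
      · intro hcontra; exact hne (by linear_combination hcontra)
      · rcases hsq with h | h
        · exact Or.inl (by have e : a + c - (a + c') = c - c' := by ring
                           rw [e]; exact h)
        · exact Or.inr (by have e : a + c' - (a + c) = c' - c := by ring
                           rw [e]; exact h)
end

section
/- Let G be the Cayley graph Cay(ℤ/mℤ, S) with 1 ∈ S, S symmetric, 0 ∉ S. Fix n with 5 ≤ n ≤ m, and suppose α is a common neighbor of the vertices 0 and n−2 with 1 < α < n−2. Then G contains a cycle of length n through the vertices {0, 1, …, n−1}. -/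
open SimpleGraph

namespace Stmt14Aux

variable {V : Type*}

/-- Build a walk from a chain of adjacencies. -/
def mkWalk (G : SimpleGraph V) : (l : List V) → (a b : V) →
    List.Chain G.Adj a (l ++ [b]) → G.Walk a b
  | [], _, _, h => SimpleGraph.Walk.cons (List.isChain_pair.mp h) SimpleGraph.Walk.nil
  | c :: l, _, b, h =>
    SimpleGraph.Walk.cons (List.chain_cons.mp h).1
      (mkWalk G l c b (List.chain_cons.mp h).2)

theorem mkWalk_support (G : SimpleGraph V) : ∀ (l : List V) (a b : V)
    (h : List.Chain G.Adj a (l ++ [b])), (mkWalk G l a b h).support = a :: (l ++ [b])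
  | [], a, b, h => rfl
  | c :: l, a, b, h => by
    simp [mkWalk]; exact mkWalk_support G l c b _

theorem mkWalk_length (G : SimpleGraph V) : ∀ (l : List V) (a b : V)
    (h : List.Chain G.Adj a (l ++ [b])), (mkWalk G l a b h).length = l.length + 1
  | [], a, b, h => rfl
  | c :: l, a, b, h => by
    simp [mkWalk]; exact mkWalk_length G l c b _

theorem chain'_range' {R : ℕ → ℕ → Prop} (h : ∀ i, R i (i + 1)) :
    ∀ (k s : ℕ), List.Chain' R (List.range' s k)
  | 0, s => List.isChain_nil
  | k + 1, s => by
    rw [List.range'_succ]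
    rw [List.Chain', List.isChain_cons]
    refine ⟨?_, chain'_range' h k (s + 1)⟩
    intro y hy
    cases k with
    | zero => simp at hy
    | succ k =>
      rw [List.range'_succ] at hy
      simp at hy
      subst hy
      exact h s

end Stmt14Aux

open Stmt14Aux List

theorem stmt14 (m n : ℕ) (S : Set (ZMod m)) (hS1 : (1 : ZMod m) ∈ S)
    (hsym : ∀ s ∈ S, -s ∈ S) (h0 : (0 : ZMod m) ∉ S)
    (h5 : 5 ≤ n) (hnm : n ≤ m) (α : ℕ) (hα1 : 1 < α) (hα2 : α < n - 2)
    (hadj0 : (cayley S).Adj 0 (α : ZMod m))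
    (hadjn : (cayley S).Adj ((n : ZMod m) - 2) (α : ZMod m)) :
    ∃ w : (cayley S).Walk 0 0, w.IsCycle ∧ w.length = n ∧
      (∀ v ∈ w.support, ∃ i, i < n ∧ v = (i : ZMod m)) ∧
      (∀ i, i < n → (i : ZMod m) ∈ w.support) := by
  have hm5 : 5 ≤ m := le_trans h5 hnm
  haveI : NeZero m := ⟨by omega⟩
  haveI : Fact (1 < m) := ⟨by omega⟩
  -- cast injectivity below m
  have hinj : ∀ x, x < m → ∀ y, y < m → (x : ZMod m) = y → x = y := by
    intro x hx y hy hxy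
    have := congrArg ZMod.val hxy
    rwa [ZMod.val_natCast_of_lt hx, ZMod.val_natCast_of_lt hy] at this
  have hadj_iff : ∀ u v : ZMod m, (cayley S).Adj u v ↔ u ≠ v ∧ (u - v ∈ S ∨ v - u ∈ S) :=
    fun u v => SimpleGraph.fromRel_adj _ u v
  have hadj_of : ∀ u v : ZMod m, u ≠ v → v - u ∈ S → (cayley S).Adj u v := by
    intro u v h1 h2
    exact (hadj_iff u v).mpr ⟨h1, Or.inr h2⟩
  -- α ∈ S
  have hαS : (α : ZMod m) ∈ S := by
    rcases (hadj_iff _ _).mp hadj0 with ⟨_, h | h⟩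
    · have := hsym _ h; simpa using this
    · simpa using h
  -- (n - 2) - α ∈ S
  have hβS : ((n : ZMod m) - 2 - α) ∈ S := by
    rcases (hadj_iff _ _).mp hadjn with ⟨_, h | h⟩
    · exact h
    · have := hsym _ h; simpa using this
  -- one-step adjacency
  have hstep : ∀ x : ZMod m, (cayley S).Adj x (x + 1) := by
    intro x
    refine hadj_of _ _ (by simp) (by simp [hS1])
  have hα0 : α ≠ 0 := by omega
  have hαn : α < n := by omega
  -- the natural number lists
  set L1 : List ℕ := (List.range' 2 (α - 1)).reverse with hL1
  set L2 : List ℕ := List.range' (α + 2) (n - 2 - α) with hL2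
  set Lfull : List ℕ := L1 ++ L2 ++ [α + 1, 1] with hLfull
  set Lnat : List ℕ := Lfull ++ [0] with hLnat
  have hL1len : L1.length = α - 1 := by simp [hL1]
  have hL2len : L2.length = n - 2 - α := by simp [hL2]
  have hmemL1 : ∀ x ∈ L1, 2 ≤ x ∧ x ≤ α := by
    intro x hx
    simp [hL1, List.mem_range'_1] at hx
    omega
  have hmemL2 : ∀ x ∈ L2, α + 2 ≤ x ∧ x ≤ n - 1 := by
    intro x hx
    simp [hL2, List.mem_range'_1] at hx
    omega
  have hmemLfull : ∀ x ∈ Lfull, 1 ≤ x ∧ x < n := by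
    intro x hx
    simp only [hLfull, List.mem_append, List.mem_cons, List.mem_singleton] at hx
    rcases hx with (hx | hx) | hx
    · have := hmemL1 x hx; omega
    · have := hmemL2 x hx; omega
    · rcases hx with rfl | rfl | h
      · omega
      · omega
      · simp at h
  have hmemLnat : ∀ x ∈ Lnat, x < n := by
    intro x hx
    simp only [hLnat, List.mem_append, List.mem_singleton] at hx
    rcases hx with hx | rfl
    · exact (hmemLfull x hx).2
    · omega
  have hndL1 : L1.Nodup := List.nodup_reverse.mpr List.nodup_range'
  have hndL2 : L2.Nodup := List.nodup_range'
  have hndLnat : Lnat.Nodup := by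
    have h12 : (L1 ++ L2).Nodup := hndL1.append hndL2 (fun a ha hb => by
      have h1 := hmemL1 a ha; have h2 := hmemL2 a hb; omega)
    have h123 : (L1 ++ L2 ++ [α + 1, 1]).Nodup := by
      refine h12.append ?_ ?_
      · refine List.nodup_cons.mpr ⟨?_, List.nodup_singleton _⟩
        simp only [List.mem_singleton]
        omega
      · intro a ha hb
        simp only [List.mem_cons, List.mem_singleton, List.not_mem_nil, or_false] at hb
        rcases List.mem_append.mp ha with h | h
        · have := hmemL1 a h; rcases hb with rfl | rfl <;> omega
        · have := hmemL2 a h; rcases hb with rfl | rfl <;> omega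
    rw [hLnat]
    refine h123.append (List.nodup_singleton _) ?_
    intro a ha hb
    simp only [List.mem_singleton] at hb
    subst hb
    have := hmemLfull 0 ha
    omega
  -- chain of adjacencies along Lfull (as elements of ZMod m)
  have hcastnat : ∀ x : ℕ, ((x + 1 : ℕ) : ZMod m) = (x : ZMod m) + 1 := by
    intro x; push_cast; ring
  have hup : ∀ k s, List.Chain' (cayley S).Adj ((List.range' s k).map (Nat.cast : ℕ → ZMod m)) := by
    intro k s
    rw [List.Chain', List.isChain_map]
    exact chain'_range' (fun i => by rw [hcastnat]; exact hstep _) k s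
  have hdown : List.Chain' (cayley S).Adj (L1.map (Nat.cast : ℕ → ZMod m)) := by
    simp only [hL1, List.map_reverse]
    rw [List.Chain', List.isChain_reverse, List.isChain_map]
    refine chain'_range' (fun i => ?_) _ _
    show (cayley S).Adj ((i + 1 : ℕ) : ZMod m) ((i : ℕ) : ZMod m)
    rw [hcastnat]
    exact (hstep _).symm
  -- generic adjacency between nats with difference in S
  have hadjnat : ∀ x y : ℕ, x < n → y < n → x ≠ y →
      ((y : ZMod m) - x ∈ S) → (cayley S).Adj (x : ZMod m) (y : ZMod m) := by
    intro x y hx hy hxy hmem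
    refine hadj_of _ _ (fun h => hxy (hinj x (by omega) y (by omega) h)) hmem
  have hα1' : L1 = α :: (List.range' 2 (α - 2)).reverse := by
    rw [hL1]
    have h : α - 1 = (α - 2) + 1 := by omega
    rw [h, List.range'_concat]
    have h2 : 2 + 1 * (α - 2) = α := by omega
    rw [h2, List.reverse_append]
    rfl
  -- the full chain
  have hchainfull : List.Chain' (cayley S).Adj (Lfull.map (Nat.cast : ℕ → ZMod m)) := by
    rw [hLfull]
    simp only [List.map_append]
    refine List.IsChain.append (List.IsChain.append hdown (hup _ _) ?_) ?_ ?_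
    · -- junction L1 → L2 : Adj 2 (α+2)
      intro x hx y hy
      simp only [hL1, List.map_reverse, List.getLast?_reverse, List.head?_map] at hx
      have hr1 : List.range' 2 (α - 1) = 2 :: List.range' 3 (α - 2) := by
        have h : α - 1 = (α - 2) + 1 := by omega
        rw [h, List.range'_succ]
      rw [hr1] at hx
      simp only [List.head?_cons, Option.map_some, Option.mem_def, Option.some.injEq] at hx
      have hr2 : L2 = (α + 2) :: List.range' (α + 3) (n - 3 - α) := by
        rw [hL2]
        have h : n - 2 - α = (n - 3 - α) + 1 := by omega
        rw [h, List.range'_succ]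
      rw [hr2, List.map_cons, List.head?_cons] at hy
      simp only [Option.mem_def, Option.some.injEq] at hy
      subst hx; subst hy
      refine hadjnat 2 (α + 2) (by omega) (by omega) (by omega) ?_
      have h3 : ((α + 2 : ℕ) : ZMod m) - ((2 : ℕ) : ZMod m) = (α : ZMod m) := by push_cast; ring
      rw [h3]; exact hαS
    · -- chain on [α+1, 1]
      refine List.isChain_cons_cons.mpr ⟨?_, List.isChain_singleton _⟩
      show (cayley S).Adj ((α + 1 : ℕ) : ZMod m) ((1 : ℕ) : ZMod m)
      refine (hadjnat 1 (α + 1) (by omega) (by omega) (by omega) ?_).symm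
      have h3 : ((α + 1 : ℕ) : ZMod m) - ((1 : ℕ) : ZMod m) = (α : ZMod m) := by push_cast; ring
      rw [h3]; exact hαS
    · -- junction (L1 ++ L2) → [α+1,1] : Adj (n-1) (α+1)
      intro x hx y hy
      have hL2ne : L2.map (Nat.cast : ℕ → ZMod m) ≠ [] := by
        simp only [hL2, ne_eq, List.map_eq_nil_iff, List.range'_eq_nil_iff]
        omega
      rw [List.getLast?_append_of_ne_nil _ hL2ne] at hx
      have hr3 : L2 = List.range' (α + 2) (n - 3 - α) ++ [n - 1] := by
        rw [hL2]
        have h : n - 2 - α = (n - 3 - α) + 1 := by omega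
        rw [h, List.range'_concat]
        congr 2
        omega
      rw [hr3, List.map_append, List.getLast?_append_of_ne_nil _ (by simp)] at hx
      simp only [List.map_singleton, List.getLast?_singleton, Option.mem_def,
        Option.some.injEq] at hx
      simp only [List.map_cons, List.head?_cons, Option.mem_def, Option.some.injEq] at hy
      subst hx; subst hy
      refine (hadjnat (α + 1) (n - 1) (by omega) (by omega) (by omega) ?_).symm
      have h3 : ((n - 1 : ℕ) : ZMod m) - ((α + 1 : ℕ) : ZMod m) = (n : ZMod m) - 2 - α := by
        have h1 : ((n - 1 : ℕ) : ZMod m) = (n : ZMod m) - 1 := by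
          push_cast [Nat.cast_sub (by omega : 1 ≤ n)]; ring
        rw [h1]; push_cast; ring
      rw [h3]; exact hβS
  -- interior list for the walk from α to 1
  set Lint : List ℕ := (List.range' 2 (α - 2)).reverse ++ L2 ++ [α + 1] with hLint
  have hLfull_eq : (α : ℕ) :: (Lint ++ [1]) = Lfull := by
    rw [hLfull, hα1', hLint]
    simp
  have hchainQ : List.Chain (cayley S).Adj ((α : ℕ) : ZMod m)
      ((Lint.map (Nat.cast : ℕ → ZMod m)) ++ [(1 : ZMod m)]) := by
    have h2 : List.Chain' (cayley S).Adj (((α : ℕ) :: (Lint ++ [1])).map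
        (Nat.cast : ℕ → ZMod m)) := by rw [hLfull_eq]; exact hchainfull
    simp only [List.map_cons, List.map_append, List.map_singleton, Nat.cast_one] at h2
    exact h2
  -- the walk
  let Q : (cayley S).Walk ((α : ℕ) : ZMod m) (1 : ZMod m) :=
    mkWalk (cayley S) (Lint.map Nat.cast) _ _ hchainQ
  have hadj10 : (cayley S).Adj (1 : ZMod m) (0 : ZMod m) := by simpa using (hstep 0).symm
  let P : (cayley S).Walk ((α : ℕ) : ZMod m) 0 :=
    Q.append (SimpleGraph.Walk.cons hadj10 SimpleGraph.Walk.nil)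
  let W : (cayley S).Walk 0 0 := SimpleGraph.Walk.cons hadj0 P
  have hQsupp : Q.support = (Lfull.map (Nat.cast : ℕ → ZMod m)) := by
    show (mkWalk (cayley S) (Lint.map Nat.cast) _ _ hchainQ).support = _
    rw [mkWalk_support, ← hLfull_eq]
    simp
  have hPsupp : P.support = (Lnat.map (Nat.cast : ℕ → ZMod m)) := by
    show (Q.append (SimpleGraph.Walk.cons hadj10 SimpleGraph.Walk.nil)).support = _
    rw [SimpleGraph.Walk.support_append, hQsupp, hLnat]
    simp
  have hWsupp : W.support = 0 :: (Lnat.map (Nat.cast : ℕ → ZMod m)) := by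
    show (SimpleGraph.Walk.cons hadj0 P).support = _
    rw [SimpleGraph.Walk.support_cons, hPsupp]
  have hinj' : ∀ x ∈ Lnat, ∀ y ∈ Lnat, (x : ZMod m) = (y : ZMod m) → x = y := by
    intro x hx y hy h
    exact hinj x (lt_of_lt_of_le (hmemLnat x hx) hnm) y (lt_of_lt_of_le (hmemLnat y hy) hnm) h
  have hPpath : P.IsPath := by
    refine SimpleGraph.Walk.IsPath.mk' ?_
    rw [hPsupp]
    exact List.Nodup.map_on hinj' hndLnat
  have hedge : s((0 : ZMod m), ((α : ℕ) : ZMod m)) ∉ P.edges := by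
    intro hmem
    have hPe : P.edges = Q.edges ++ [s((1 : ZMod m), (0 : ZMod m))] := by
      show (Q.append (SimpleGraph.Walk.cons hadj10 SimpleGraph.Walk.nil)).edges = _
      rw [SimpleGraph.Walk.edges_append]
      rfl
    rw [hPe, List.mem_append] at hmem
    rcases hmem with h | h
    · have h0mem : (0 : ZMod m) ∈ Q.support :=
        SimpleGraph.Walk.fst_mem_support_of_mem_edges Q h
      rw [hQsupp] at h0mem
      simp only [List.mem_map] at h0mem
      obtain ⟨x, hx, hx0⟩ := h0mem
      have hb := hmemLfull x hx
      have : x = 0 := hinj x (by omega) 0 (by omega) (by simpa using hx0)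
      omega
    · simp only [List.mem_singleton, Sym2.eq_iff] at h
      rcases h with ⟨h1, h2⟩ | ⟨h1, h2⟩
      · exact one_ne_zero h1.symm
      · have : α = 1 := hinj α (by omega) 1 (by omega) (by simpa using h2)
        omega
  have hcyc : W.IsCycle := by
    show (SimpleGraph.Walk.cons hadj0 P).IsCycle
    rw [SimpleGraph.Walk.cons_isCycle_iff]
    exact ⟨hPpath, hedge⟩
  have hLintlen : Lint.length = (α - 2) + (n - 2 - α) + 1 := by
    simp only [hLint, List.length_append, List.length_reverse, List.length_range',
      List.length_cons, List.length_nil]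
    omega
  have hlen : W.length = n := by
    show (SimpleGraph.Walk.cons hadj0 P).length = n
    rw [SimpleGraph.Walk.length_cons]
    show (Q.append (SimpleGraph.Walk.cons hadj10 SimpleGraph.Walk.nil)).length + 1 = n
    rw [SimpleGraph.Walk.length_append]
    have hq : Q.length = (Lint.map (Nat.cast : ℕ → ZMod m)).length + 1 :=
      mkWalk_length (cayley S) (Lint.map Nat.cast) _ _ hchainQ
    rw [hq, List.length_map, hLintlen]
    simp only [SimpleGraph.Walk.length_cons, SimpleGraph.Walk.length_nil]
    omega
  refine ⟨W, hcyc, hlen, ?_, ?_⟩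
  · intro v hv
    rw [hWsupp] at hv
    rcases List.mem_cons.mp hv with rfl | hv
    · exact ⟨0, by omega, by simp⟩
    · obtain ⟨x, hx, rfl⟩ := List.mem_map.mp hv
      exact ⟨x, hmemLnat x hx, rfl⟩
  · intro i hi
    have hlenLnat : Lnat.length = n := by
      simp only [hLnat, hLfull, List.length_append, List.length_cons, List.length_nil]
      omega
    have hfin : Lnat.toFinset = Finset.range n := by
      refine Finset.eq_of_subset_of_card_le ?_ ?_
      · intro x hx
        simp only [List.mem_toFinset] at hx
        exact Finset.mem_range.mpr (hmemLnat x hx)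
      · rw [Finset.card_range, List.toFinset_card_of_nodup hndLnat, hlenLnat]
    have hiL : i ∈ Lnat := by
      rw [← List.mem_toFinset, hfin]
      exact Finset.mem_range.mpr hi
    rw [hWsupp]
    exact List.mem_cons_of_mem _ (List.mem_map_of_mem hiL)
end

section
/- Let G₂ be a graph on vertex set V₂ of size n with a Hamiltonian path, and let G₁ be a Hamiltonian graph of order q₀ (any positive integer ≥ 3). If a graph G on vertex set V₁ × V₂ contains G₁ × G₂ as a spanning subgraph and G₁ × G₂ contains a Hamiltonian path, then G contains a Hamiltonian path. In particular, by induction, for a basis f₁,…,f_{n−1} of squares, each induced subgraph G_{W*_i} of the Paley graph P(q₀ⁿ) on the subspace W*_i = span(f₁,…,f_i) contains a Hamiltonian path. -/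
open SimpleGraph

namespace Stmt19Aux

/-- From a list that is a chain of adjacencies we get a walk with that support. -/
lemma walk_of_chain {V : Type*} (G : SimpleGraph V) :
    ∀ (l : List V) (a : V), List.Chain G.Adj a l →
      ∃ (b : V) (w : G.Walk a b), w.support = a :: l := by
  intro l
  induction l with
  | nil => exact fun a _ => ⟨a, Walk.nil, rfl⟩
  | cons c l ih =>
    intro a h
    have h : G.Adj a c ∧ List.Chain G.Adj c l := List.isChain_cons_cons.1 h
    obtain ⟨b, w, hw⟩ := ih c h.2
    exact ⟨b, Walk.cons h.1 w, by rw [Walk.support_cons, hw]⟩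

/-- A nonempty nodup chain covering a set `S` gives a Hamiltonian path in the
induced graph on `S`. -/
lemma ham_of_list {V : Type*} [DecidableEq V] (G : SimpleGraph V) (S : Set V) (l : List V)
    (hne : l ≠ []) (hnd : l.Nodup) (hch : l.Chain' G.Adj)
    (hmem : ∀ x, x ∈ l ↔ x ∈ S) :
    ∃ (u v : S) (p : (G.induce S).Walk u v), p.IsHamiltonian := by
  have H : ∀ a ∈ l, a ∈ S := fun a ha => (hmem a).1 ha
  set l' : List S := l.attachWith (· ∈ S) H with hl'
  have hmap : l'.map Subtype.val = l := List.attachWith_map_subtype_val H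
  have hne' : l' ≠ [] := by
    intro h
    rw [h] at hmap
    exact hne hmap.symm
  have hnd' : l'.Nodup := by
    have := hmap ▸ hnd
    exact this.of_map Subtype.val
  have hch' : l'.Chain' (G.induce S).Adj := by
    have : (l'.map Subtype.val).Chain' G.Adj := hmap ▸ hch
    replace this := (List.isChain_map Subtype.val).1 this
    exact this.imp (fun a b h => by simpa using h)
  have hcov : ∀ s : S, s ∈ l' := by
    intro s
    have : (s : V) ∈ l'.map Subtype.val := hmap ▸ (hmem s).2 s.2
    obtain ⟨a, ha, hav⟩ := List.mem_map.1 this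
    exact (Subtype.ext hav : a = s) ▸ ha
  obtain ⟨a, rest, hcons⟩ := List.exists_cons_of_ne_nil hne'
  rw [hcons] at hch'
  have hchain : List.Chain (G.induce S).Adj a rest := hch'
  obtain ⟨b, w, hw⟩ := walk_of_chain (G.induce S) rest a hchain
  refine ⟨a, b, w, fun s => ?_⟩
  rw [hw, ← hcons]
  exact @List.count_eq_one_of_mem S instBEqOfDecidableEq _ s _ hnd' (hcov s)

/-- The snake list: `m` translated copies of `l`, alternately reversed. -/
def snake {F : Type*} [AddMonoid F] (l : List F) (g : F) : ℕ → List F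
  | 0 => []
  | k + 1 => snake l g k ++ (if Even k then l else l.reverse).map (· + k • g)

lemma mem_snake {F : Type*} [AddMonoid F] {l : List F} {g : F} {x : F} :
    ∀ {m : ℕ}, x ∈ snake l g m ↔ ∃ k < m, ∃ y ∈ l, x = y + k • g := by
  have hiff : ∀ (k : ℕ) (y : F), (y ∈ if Even k then l else l.reverse) ↔ y ∈ l := by
    intro k y; split <;> simp
  intro m
  induction m with
  | zero => simp [snake]
  | succ k ih =>
    simp only [snake, List.mem_append, ih, List.mem_map]
    constructor
    · rintro (⟨j, hj, y, hy, rfl⟩ | ⟨y, hy, rfl⟩)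
      · exact ⟨j, Nat.lt_succ_of_lt hj, y, hy, rfl⟩
      · exact ⟨k, Nat.lt_succ_self k, y, (hiff k y).1 hy, rfl⟩
    · rintro ⟨j, hj, y, hy, rfl⟩
      rcases Nat.lt_succ_iff_lt_or_eq.1 hj with h | rfl
      · exact Or.inl ⟨j, h, y, hy, rfl⟩
      · exact Or.inr ⟨y, (hiff j y).2 hy, rfl⟩

lemma snake_length {F : Type*} [AddMonoid F] (l : List F) (g : F) :
    ∀ m, (snake l g m).length = m * l.length := by
  intro m
  induction m with
  | zero => simp [snake]
  | succ k ih =>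
    rw [snake, List.length_append, ih, List.length_map]
    split <;> simp [Nat.succ_mul]

lemma snake_getLast? {F : Type*} [AddMonoid F] {l : List F} (hl : l ≠ []) (g : F) (k : ℕ) :
    (snake l g (k + 1)).getLast? =
      ((if Even k then l.getLast? else l.head?).map (· + k • g)) := by
  have hbl : (if Even k then l else l.reverse) ≠ [] := by
    split
    · exact hl
    · simpa using hl
  rw [snake, List.getLast?_append_of_ne_nil _ (by simpa using hbl), List.getLast?_map]
  congr 1
  split <;> simp

lemma snake_chain' {F : Type*} [AddMonoid F] {G : SimpleGraph F} {l : List F} {g : F}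
    (hl : l ≠ [])
    (hG : ∀ x y (t : F), G.Adj x y → G.Adj (x + t) (y + t))
    (hg : ∀ x : F, G.Adj x (x + g))
    (hch : l.Chain' G.Adj) :
    ∀ m, (snake l g m).Chain' G.Adj := by
  intro m
  induction m with
  | zero => exact List.isChain_nil
  | succ k ih =>
    rw [snake]
    refine ih.append ?_ ?_
    · refine List.isChain_map_of_isChain _ (fun a b h => hG a b _ h) ?_
      split
      · exact hch
      · exact List.isChain_reverse.2 (hch.imp fun a b h => h.symm)
    · intro x hx y hy
      match k, hx with
      | 0, hx => simp [snake] at hx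
      | (j + 1), hx =>
        rw [snake_getLast? hl g j] at hx
        rw [List.head?_map] at hy
        by_cases hj : Even j
        · have hj1 : ¬ Even (j + 1) := by simpa [Nat.even_add_one] using hj
          rw [if_pos hj] at hx
          rw [if_neg hj1, List.head?_reverse] at hy
          obtain ⟨a, ha, rfl⟩ := Option.map_eq_some_iff.1 (Option.mem_def.1 hx)
          obtain ⟨b, hb, rfl⟩ := Option.map_eq_some_iff.1 (Option.mem_def.1 hy)
          obtain rfl : a = b := by rw [ha] at hb; exact (Option.some_inj.1 hb)
          have : a + (j + 1) • g = (a + j • g) + g := by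
            rw [succ_nsmul, add_assoc]
          rw [this]
          exact hg _
        · have hj1 : Even (j + 1) := Nat.even_add_one.2 hj
          rw [if_neg hj] at hx
          rw [if_pos hj1] at hy
          obtain ⟨a, ha, rfl⟩ := Option.map_eq_some_iff.1 (Option.mem_def.1 hx)
          obtain ⟨b, hb, rfl⟩ := Option.map_eq_some_iff.1 (Option.mem_def.1 hy)
          obtain rfl : a = b := by rw [ha] at hb; exact (Option.some_inj.1 hb)
          have : a + (j + 1) • g = (a + j • g) + g := by
            rw [succ_nsmul, add_assoc]
          rw [this]
          exact hg _

lemma snake_nodup {q₀ : ℕ} [Fact q₀.Prime] {F : Type*} [AddCommGroup F]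
    [Module (ZMod q₀) F] {W : Submodule (ZMod q₀) F} {l : List F} {g : F}
    (hmem : ∀ y ∈ l, y ∈ W) (hg : g ∉ W) (hnd : l.Nodup) :
    ∀ m, m ≤ q₀ → (snake l g m).Nodup := by
  have key : ∀ (j k : ℕ), j < k → k < q₀ → ∀ y ∈ l, ∀ y' ∈ l, y + j • g ≠ y' + k • g := by
    intro j k hjk hk y hy y' hy' heq
    have hd : (k - j) • g = y - y' := by
      have h1 : k • g = (k - j) • g + j • g := by
        rw [← add_nsmul, Nat.sub_add_cancel (le_of_lt hjk)]
      rw [h1, ← add_assoc] at heq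
      have h2 : y = y' + (k - j) • g := add_right_cancel heq
      rw [h2]; abel
    have hdW : ((k - j : ℕ) : ZMod q₀) • g ∈ W := by
      rw [Nat.cast_smul_eq_nsmul, hd]
      exact W.sub_mem (hmem y hy) (hmem y' hy')
    have hne : ((k - j : ℕ) : ZMod q₀) ≠ 0 := by
      rw [Ne, ZMod.natCast_eq_zero_iff]
      intro hdvd
      have h1 : 0 < k - j := Nat.sub_pos_of_lt hjk
      have h2 : k - j < q₀ := lt_of_le_of_lt (Nat.sub_le k j) hk
      exact absurd (Nat.le_of_dvd h1 hdvd) (not_le_of_gt h2)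
    apply hg
    have := W.smul_mem (((k - j : ℕ) : ZMod q₀))⁻¹ hdW
    rwa [smul_smul, inv_mul_cancel₀ hne, one_smul] at this
  intro m
  induction m with
  | zero => simp [snake]
  | succ k ih =>
    intro hk
    rw [snake]
    refine (ih (le_trans (Nat.le_succ k) hk)).append ?_ ?_
    · refine List.Nodup.map (add_left_injective (k • g)) ?_
      split
      · exact hnd
      · exact List.nodup_reverse.2 hnd
    · rw [List.disjoint_left]
      intro x hx hx'
      obtain ⟨j, hj, y, hy, rfl⟩ := mem_snake.1 hx
      obtain ⟨y', hy', hval⟩ := List.mem_map.1 hx'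
      have hy'l : y' ∈ l := by
        revert hy'; split <;> simp_all
      exact key j k hj (Nat.lt_of_succ_le hk) y hy y' hy'l hval.symm

end Stmt19Aux

theorem stmt19 :
    (∀ (V₁ V₂ : Type) (_ : Fintype V₁) (_ : Fintype V₂)
      (_ : DecidableEq V₁) (_ : DecidableEq V₂)
      (q₀ n : ℕ) (G₁ : SimpleGraph V₁) (G₂ : SimpleGraph V₂)
      (G : SimpleGraph (V₁ × V₂)),
      Fintype.card V₁ = q₀ → 3 ≤ q₀ → Fintype.card V₂ = n →
      (∃ (v : V₁) (w : G₁.Walk v v), w.IsHamiltonianCycle) →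
      (∃ (u v : V₂) (p : G₂.Walk u v), p.IsHamiltonian) →
      (G₁ □ G₂) ≤ G →
      (∃ (u v : V₁ × V₂) (p : (G₁ □ G₂).Walk u v), p.IsHamiltonian) →
      ∃ (u v : V₁ × V₂) (p : G.Walk u v), p.IsHamiltonian) ∧
    (∀ (q₀ n : ℕ) (_ : Fact q₀.Prime), Odd q₀ →
      ∀ (F : Type) (_ : Field F) (_ : Fintype F) (_ : DecidableEq F)
        (_ : Algebra (ZMod q₀) F),
      Fintype.card F = q₀ ^ n → q₀ ^ n % 4 = 1 →
      ∀ (f : Fin (n - 1) → F), LinearIndependent (ZMod q₀) f →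
        (∀ j, f j ≠ 0 ∧ IsSquare (f j)) →
      ∀ i, i ≤ n - 1 →
        ∃ (u v : ((Submodule.span (ZMod q₀) (f '' {j | (j : ℕ) < i}) :
            Submodule (ZMod q₀) F) : Set F))
          (p : ((paley F).induce ((Submodule.span (ZMod q₀) (f '' {j | (j : ℕ) < i}) :
            Submodule (ZMod q₀) F) : Set F)).Walk u v), p.IsHamiltonian) := by
  constructor
  · intro V₁ V₂ _ _ _ _ q₀ n G₁ G₂ G _ _ _ _ _ hle hham
    obtain ⟨u, v, p, hp⟩ := hham
    refine ⟨u, v, p.mapLe hle, ?_⟩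
    intro a
    have hsupp : (p.mapLe hle).support = p.support := by
      exact Walk.support_mapLe_eq_support ..
    rw [hsupp]
    exact hp a
  · intro q₀ n hq _ F _ _ _ _ _ _ f hli hsq
    haveI : NeZero q₀ := ⟨hq.out.ne_zero⟩
    suffices H : ∀ i ≤ n - 1, ∃ l : List F, l ≠ [] ∧ l.Nodup ∧ l.Chain' (paley F).Adj ∧
        ∀ x : F, x ∈ l ↔ x ∈ Submodule.span (ZMod q₀) (f '' {j | (j : ℕ) < i}) by
      intro i hi
      obtain ⟨l, h0, h1, h2, h3⟩ := H i hi
      exact Stmt19Aux.ham_of_list _ _ l h0 h1 h2 h3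
    intro i
    induction i with
    | zero =>
      intro _
      refine ⟨[0], by simp, by simp, List.isChain_singleton _, fun x => ?_⟩
      have hempty : (f '' {j : Fin (n - 1) | (j : ℕ) < 0}) = ∅ := by simp
      simp [hempty, Submodule.mem_bot]
    | succ i ih =>
      intro hsucc
      have hi : i ≤ n - 1 := le_trans (Nat.le_succ i) hsucc
      have hilt : i < n - 1 := Nat.lt_of_succ_le hsucc
      obtain ⟨l, h0, h1, h2, h3⟩ := ih hi
      set g : F := f ⟨i, hilt⟩ with hgdef
      set W : Submodule (ZMod q₀) F :=
        Submodule.span (ZMod q₀) (f '' {j | (j : ℕ) < i}) with hWdef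
      have hgW : g ∉ W := hli.notMem_span_image (by simp)
      have hg0 : g ≠ 0 := (hsq ⟨i, hilt⟩).1
      have hgsq : IsSquare g := (hsq ⟨i, hilt⟩).2
      have hset : (f '' {j : Fin (n - 1) | (j : ℕ) < i + 1}) =
          insert g (f '' {j | (j : ℕ) < i}) := by
        have hsets : {j : Fin (n - 1) | (j : ℕ) < i + 1} =
            insert (⟨i, hilt⟩ : Fin (n - 1)) {j : Fin (n - 1) | (j : ℕ) < i} := by
          ext j
          simp only [Set.mem_setOf_eq, Set.mem_insert_iff]
          constructor
          · intro h
            rcases Nat.lt_succ_iff_lt_or_eq.1 h with h | h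
            · exact Or.inr h
            · exact Or.inl (Fin.val_injective h)
          · rintro (rfl | h)
            · exact Nat.lt_succ_self i
            · exact Nat.lt_succ_of_lt h
        rw [hgdef, hsets, Set.image_insert_eq]
      refine ⟨Stmt19Aux.snake l g q₀, ?_, ?_, ?_, ?_⟩
      · intro h
        have := Stmt19Aux.snake_length l g q₀
        rw [h] at this
        simp only [List.length_nil] at this
        rcases Nat.mul_eq_zero.1 this.symm with h' | h'
        · exact hq.out.ne_zero h'
        · exact h0 (List.length_eq_zero_iff.1 h')
      · exact Stmt19Aux.snake_nodup (fun y hy => (h3 y).1 hy) hgW h1 q₀ le_rfl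
      · refine Stmt19Aux.snake_chain' h0 ?_ ?_ h2 q₀
        · intro x y t h
          rw [paley, SimpleGraph.fromRel_adj] at h ⊢
          refine ⟨fun hc => h.1 (by exact add_right_cancel hc), ?_⟩
          rw [add_sub_add_right_eq_sub, add_sub_add_right_eq_sub]
          exact h.2
        · intro x
          rw [paley, SimpleGraph.fromRel_adj]
          refine ⟨fun hc => hg0 (by simpa using hc.symm), Or.inr ?_⟩
          simpa using hgsq
      · intro x
        rw [hset, Submodule.mem_span_insert, Stmt19Aux.mem_snake]
        constructor
        · rintro ⟨k, hk, y, hy, rfl⟩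
          refine ⟨((k : ℕ) : ZMod q₀), y, (h3 y).1 hy, ?_⟩
          rw [Nat.cast_smul_eq_nsmul, add_comm]
        · rintro ⟨c, z, hz, rfl⟩
          refine ⟨c.val, ZMod.val_lt c, z, (h3 z).2 hz, ?_⟩
          rw [← Nat.cast_smul_eq_nsmul (ZMod q₀) c.val g, ZMod.natCast_val,
            ZMod.cast_id, add_comm]
end
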